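/- arXiv:1909.04343 — 8 statements merged into one kernel-verified Lean document; each statement's English description precedes it below -/
import Mathlib

section
/- For any n ≥ 1 and any real numbers s, t, the set {(p + s·q)/2^n : p, q ∈ ℤ, 0 ≤ p, q ≤ 2^n − 1} is contained in the set {φ_α(0) : α ∈ {1,...,6}^n}, where the φ_i are the maps of the IFS Φ_{s,t}. -/
open scoped BigOperators

noncomputable def phiST (s t : ℝ) (i : Fin 6) (x : ℝ) : ℝ :=
  (x + ![0, 1, s, 1 + s, t, 1 + t] i) / 2

noncomputable def compST (s t : ℝ) (l : List (Fin 6)) : ℝ → ℝ :=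
  l.foldr (fun i g => phiST s t i ∘ g) id

noncomputable def DeltaST (s t : ℝ) (n : ℕ) : ℝ :=
  sInf {r : ℝ | ∃ a b : List (Fin 6), a.length = n ∧ b.length = n ∧ a ≠ b ∧
    r = |compST s t a 0 - compST s t b 0|}

lemma digit_eq (s t : ℝ) (a b : ℕ) (ha : a < 2) (hb : b < 2) (h : a + 2 * b < 6) :
    ![0, 1, s, 1 + s, t, 1 + t] ⟨a + 2 * b, h⟩ = (a : ℝ) + s * b := by
  interval_cases a <;> interval_cases b <;> norm_num

lemma key (s t : ℝ) : ∀ n (p q : ℕ), p < 2 ^ n → q < 2 ^ n →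
    ∃ l : List (Fin 6), l.length = n ∧ compST s t l 0 = ((p : ℝ) + s * q) / 2 ^ n := by
  intro n
  induction n with
  | zero =>
    intro p q hp hq
    interval_cases p
    interval_cases q
    exact ⟨[], rfl, by simp [compST]⟩
  | succ n ih =>
    intro p q hp hq
    have h2 : (0:ℕ) < 2 ^ n := Nat.pow_pos (by norm_num)
    obtain ⟨l, hl, hval⟩ := ih (p % 2 ^ n) (q % 2 ^ n) (Nat.mod_lt _ h2) (Nat.mod_lt _ h2)
    have hbp : p / 2 ^ n < 2 := Nat.div_lt_of_lt_mul (by rw [pow_succ] at hp; omega)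
    have hbq : q / 2 ^ n < 2 := Nat.div_lt_of_lt_mul (by rw [pow_succ] at hq; omega)
    have hlt : p / 2 ^ n + 2 * (q / 2 ^ n) < 6 := by omega
    refine ⟨⟨p / 2 ^ n + 2 * (q / 2 ^ n), hlt⟩ :: l, by simp [hl], ?_⟩
    have hcomp : compST s t (⟨p / 2 ^ n + 2 * (q / 2 ^ n), hlt⟩ :: l) 0 =
        (compST s t l 0 + ![0, 1, s, 1 + s, t, 1 + t] ⟨p / 2 ^ n + 2 * (q / 2 ^ n), hlt⟩) / 2 :=
      rfl
    have hpr : (p : ℝ) = ((p % 2 ^ n : ℕ) : ℝ) + ((p / 2 ^ n : ℕ) : ℝ) * 2 ^ n := by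
      exact_mod_cast congrArg (Nat.cast (R := ℝ)) (Nat.mod_add_div' p (2 ^ n)).symm
    have hqr : (q : ℝ) = ((q % 2 ^ n : ℕ) : ℝ) + ((q / 2 ^ n : ℕ) : ℝ) * 2 ^ n := by
      exact_mod_cast congrArg (Nat.cast (R := ℝ)) (Nat.mod_add_div' q (2 ^ n)).symm
    rw [hcomp, digit_eq s t _ _ hbp hbq hlt, hval, hpr, hqr]
    have h2r : (2:ℝ) ^ n ≠ 0 := by positivity
    field_simp
    ring

theorem stmt1 (n : ℕ) (hn : 1 ≤ n) (s t : ℝ) :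
    {x : ℝ | ∃ p q : ℤ, 0 ≤ p ∧ p ≤ 2 ^ n - 1 ∧ 0 ≤ q ∧ q ≤ 2 ^ n - 1 ∧
      x = ((p : ℝ) + s * q) / 2 ^ n} ⊆
    {x : ℝ | ∃ l : List (Fin 6), l.length = n ∧ x = compST s t l 0} := by
  rintro x ⟨p, q, hp0, hp1, hq0, hq1, rfl⟩
  have hcast : (2:ℤ) ^ n = ((2 ^ n : ℕ) : ℤ) := by push_cast; ring
  have hp : p.toNat < 2 ^ n := by omega
  have hq : q.toNat < 2 ^ n := by omega
  obtain ⟨l, hl, hval⟩ := key s t n p.toNat q.toNat hp hq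
  refine ⟨l, hl, ?_⟩
  rw [hval]
  have e1 : ((p.toNat : ℕ) : ℝ) = (p : ℝ) := by exact_mod_cast Int.toNat_of_nonneg hp0
  have e2 : ((q.toNat : ℕ) : ℝ) = (q : ℝ) := by exact_mod_cast Int.toNat_of_nonneg hq0
  rw [e1, e2]
end

section
/- Let s, t be irrational real numbers and let Δₙ := min{|φ_α(0) − φ_β(0)| : α, β ∈ {1,...,6}ⁿ, α ≠ β} for the IFS Φ_{s,t} (all contraction ratios being equal to 2^{−n} for words of length n). Then for every n ≥ 1, Δₙ ≤ min over (p,q) ∈ ℤ², 0 ≤ p,q ≤ 2ⁿ−1, (p,q) ≠ (0,0), of (1/2ⁿ)|q·s − p|, and likewise Δₙ ≤ min over such (p,q) of (1/2ⁿ)|q·t − p|. -/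
open scoped BigOperators

/-- Word of length `n` whose `k`-th letter is `d` if the `2^(n-1-k)` bit of `q` is set, else `0`. -/
def wordD (d : Fin 6) : ℕ → ℕ → List (Fin 6)
  | 0, _ => []
  | n+1, q => (if 2^n ≤ q then d else 0) :: wordD d n (q % 2^n)

lemma wordD_length (d : Fin 6) (n q : ℕ) : (wordD d n q).length = n := by
  induction n generalizing q with
  | zero => rfl
  | succ n ih => simp [wordD, ih]

lemma compST_cons (s t : ℝ) (i : Fin 6) (l : List (Fin 6)) (x : ℝ) :
    compST s t (i :: l) x = (compST s t l x + ![0, 1, s, 1 + s, t, 1 + t] i) / 2 := by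
  simp [compST, phiST]

lemma value_wordD (s t : ℝ) (d : Fin 6) (n q : ℕ) (h : q < 2^n) :
    compST s t (wordD d n q) 0 = q * (![0, 1, s, 1 + s, t, 1 + t] d) / 2^n := by
  induction n generalizing q with
  | zero => interval_cases q; simp [wordD, compST]
  | succ n ih =>
    rw [wordD, compST_cons, ih _ (Nat.mod_lt _ (by positivity))]
    by_cases hq : 2^n ≤ q
    · have h1 : q % 2^n = q - 2^n := by
        rw [Nat.mod_eq_sub_mod hq, Nat.mod_eq_of_lt (by omega)]
      rw [h1, if_pos hq]
      have : ((q - 2^n : ℕ) : ℝ) = (q : ℝ) - 2^n := by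
        push_cast [Nat.cast_sub hq]; ring
      rw [this]
      have h2 : (2:ℝ)^n ≠ 0 := by positivity
      field_simp
      ring
    · rw [Nat.mod_eq_of_lt (by omega), if_neg hq]
      simp only [Matrix.cons_val_zero, add_zero]
      rw [pow_succ]
      ring

lemma main_aux (s t : ℝ) (d : Fin 6) (hu : Irrational (![0, 1, s, 1 + s, t, 1 + t] d))
    (n : ℕ) (p q : ℤ) (hp0 : 0 ≤ p) (hp : p ≤ 2 ^ n - 1) (hq0 : 0 ≤ q) (hq : q ≤ 2 ^ n - 1)
    (hpq : ¬(p = 0 ∧ q = 0)) :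
    DeltaST s t n ≤ (1 / 2 ^ n) * |(q : ℝ) * (![0, 1, s, 1 + s, t, 1 + t] d) - p| := by
  set v : ℝ := ![0, 1, s, 1 + s, t, 1 + t] d with hv
  have h2n : (1:ℤ) ≤ 2 ^ n := one_le_pow₀ (by norm_num)
  have hqlt : q.toNat < 2 ^ n := by
    rw [Int.toNat_lt hq0]; push_cast; omega
  have hplt : p.toNat < 2 ^ n := by
    rw [Int.toNat_lt hp0]; push_cast; omega
  have hqc : ((q.toNat : ℕ) : ℝ) = (q : ℝ) := by
    rw [← Int.cast_natCast, Int.toNat_of_nonneg hq0]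
  have hpc : ((p.toNat : ℕ) : ℝ) = (p : ℝ) := by
    rw [← Int.cast_natCast, Int.toNat_of_nonneg hp0]
  set a : List (Fin 6) := wordD d n q.toNat with ha
  set b : List (Fin 6) := wordD 1 n p.toNat with hb
  have hva : compST s t a 0 = (q : ℝ) * v / 2 ^ n := by
    rw [ha, value_wordD s t d n _ hqlt, hqc]
  have hvb : compST s t b 0 = (p : ℝ) / 2 ^ n := by
    rw [hb, value_wordD s t 1 n _ hplt, hpc]
    simp
  have hne : a ≠ b := by
    intro hab
    have heq : (q : ℝ) * v = (p : ℝ) := by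
      have := hva.symm.trans (hab ▸ hvb)
      have h2 : (2:ℝ)^n ≠ 0 := by positivity
      field_simp at this
      linarith [this]
    rcases eq_or_ne q 0 with hq' | hq'
    · apply hpq
      subst hq'
      constructor
      · exact_mod_cast (by simpa using heq.symm)
      · rfl
    · apply hu
      refine ⟨(p : ℚ) / (q : ℚ), ?_⟩
      have hqr : ((q : ℝ)) ≠ 0 := Int.cast_ne_zero.mpr hq'
      push_cast
      field_simp
      linarith [heq]
  have hmem : |compST s t a 0 - compST s t b 0| ∈
      {r : ℝ | ∃ a b : List (Fin 6), a.length = n ∧ b.length = n ∧ a ≠ b ∧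
        r = |compST s t a 0 - compST s t b 0|} :=
    ⟨a, b, wordD_length d n _, wordD_length 1 n _, hne, rfl⟩
  have hbdd : BddBelow {r : ℝ | ∃ a b : List (Fin 6), a.length = n ∧ b.length = n ∧ a ≠ b ∧
      r = |compST s t a 0 - compST s t b 0|} := by
    refine ⟨0, fun r hr => ?_⟩
    obtain ⟨x, y, _, _, _, hr⟩ := hr
    rw [hr]; exact abs_nonneg _
  have hle : DeltaST s t n ≤ |compST s t a 0 - compST s t b 0| := csInf_le hbdd hmem
  calc DeltaST s t n ≤ |compST s t a 0 - compST s t b 0| := hle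
    _ = (1 / 2 ^ n) * |(q : ℝ) * v - p| := by
        rw [hva, hvb]
        rw [div_sub_div_same, abs_div]
        rw [abs_of_pos (by positivity : (0:ℝ) < 2 ^ n)]
        ring

theorem stmt2 (s t : ℝ) (hs : Irrational s) (ht : Irrational t) (n : ℕ) (hn : 1 ≤ n) :
    (∀ p q : ℤ, 0 ≤ p → p ≤ 2 ^ n - 1 → 0 ≤ q → q ≤ 2 ^ n - 1 → ¬(p = 0 ∧ q = 0) →
      DeltaST s t n ≤ (1 / 2 ^ n) * |(q : ℝ) * s - p|) ∧
    (∀ p q : ℤ, 0 ≤ p → p ≤ 2 ^ n - 1 → 0 ≤ q → q ≤ 2 ^ n - 1 → ¬(p = 0 ∧ q = 0) →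
      DeltaST s t n ≤ (1 / 2 ^ n) * |(q : ℝ) * t - p|) := by
  constructor
  · intro p q hp0 hp hq0 hq hpq
    have := main_aux s t 2 (by simpa using hs) n p q hp0 hp hq0 hq hpq
    simpa using this
  · intro p q hp0 hp hq0 hq hpq
    have := main_aux s t 4 (by simpa using ht) n p q hp0 hp hq0 hq hpq
    simpa using this
end

section
/- Let s, t be irrational real numbers. If there exist n ≥ 1 and sequences (ω_{i,1}), (δ_{i,1}), (δ'_{i,1}), (ω_{i,2}), (δ_{i,2}), (δ'_{i,2}) ∈ {0,1}ⁿ, not all three pairs equal, such that Σ ω_{i,1}/2^i + s·Σ δ_{i,1}/2^i + t·Σ δ'_{i,1}/2^i = Σ ω_{i,2}/2^i + s·Σ δ_{i,2}/2^i + t·Σ δ'_{i,2}/2^i, then there exist integers a, b, c, d with a ≠ 0, b ≠ 0, d ≠ 0 such that t = (a/b)·s + c/d. -/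
open scoped BigOperators

lemma sumlt (n : ℕ) (f : ℕ → ℕ) (hf : ∀ i < n, f i ≤ 1) :
    ∑ i ∈ Finset.range n, f i * 2 ^ (n - (i + 1)) < 2 ^ n := by
  induction n generalizing f with
  | zero => simp
  | succ n ih =>
    rw [Finset.sum_range_succ']
    have h1 : ∀ i ∈ Finset.range n, f (i + 1) * 2 ^ (n + 1 - (i + 1 + 1))
        = f (i + 1) * 2 ^ (n - (i + 1)) := by
      intro i _
      congr 2
      omega
    rw [Finset.sum_congr rfl h1]
    have h2 : ∑ i ∈ Finset.range n, f (i + 1) * 2 ^ (n - (i + 1)) < 2 ^ n :=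
      ih (fun i => f (i + 1)) (fun i hi => hf (i + 1) (by omega))
    have h3 : f 0 ≤ 1 := hf 0 (by omega)
    simp only [Nat.add_sub_cancel]
    have h4 : f 0 * 2 ^ n ≤ 2 ^ n := by
      simpa using Nat.mul_le_mul_right (2 ^ n) h3
    have h5 : (2 : ℕ) ^ (n + 1) = 2 ^ n + 2 ^ n := by ring
    omega

lemma binuniq (n : ℕ) (f g : ℕ → ℕ) (hf : ∀ i < n, f i ≤ 1) (hg : ∀ i < n, g i ≤ 1)
    (h : ∑ i ∈ Finset.range n, f i * 2 ^ (n - (i + 1))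
       = ∑ i ∈ Finset.range n, g i * 2 ^ (n - (i + 1))) :
    ∀ i < n, f i = g i := by
  induction n generalizing f g with
  | zero => omega
  | succ n ih =>
    rw [Finset.sum_range_succ', Finset.sum_range_succ'] at h
    have h1 : ∀ (φ : ℕ → ℕ), ∀ i ∈ Finset.range n, φ (i + 1) * 2 ^ (n + 1 - (i + 1 + 1))
        = φ (i + 1) * 2 ^ (n - (i + 1)) := by
      intro φ i _
      congr 2
      omega
    rw [Finset.sum_congr rfl (h1 f), Finset.sum_congr rfl (h1 g)] at h
    have hsf : ∑ i ∈ Finset.range n, f (i + 1) * 2 ^ (n - (i + 1)) < 2 ^ n :=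
      sumlt n (fun i => f (i + 1)) (fun i hi => hf (i + 1) (by omega))
    have hsg : ∑ i ∈ Finset.range n, g (i + 1) * 2 ^ (n - (i + 1)) < 2 ^ n :=
      sumlt n (fun i => g (i + 1)) (fun i hi => hg (i + 1) (by omega))
    have hf0 : f 0 ≤ 1 := hf 0 (by omega)
    have hg0 : g 0 ≤ 1 := hg 0 (by omega)
    simp only [Nat.add_sub_cancel] at h
    have hkey : ∀ a b Sa Sb : ℕ, a ≤ 1 → b ≤ 1 → Sa < 2 ^ n → Sb < 2 ^ n →
        Sa + a * 2 ^ n = Sb + b * 2 ^ n → a = b := by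
      intro a b Sa Sb ha hb hSa hSb hE
      interval_cases a <;> interval_cases b
      · rfl
      · simp at hE; omega
      · simp at hE; omega
      · rfl
    have h0 : f 0 = g 0 := hkey (f 0) (g 0) _ _ hf0 hg0 hsf hsg h
    have hrest : ∑ i ∈ Finset.range n, f (i + 1) * 2 ^ (n - (i + 1))
        = ∑ i ∈ Finset.range n, g (i + 1) * 2 ^ (n - (i + 1)) := by
      rw [h0] at h
      exact Nat.add_right_cancel h
    have := ih (fun i => f (i + 1)) (fun i => g (i + 1))
      (fun i hi => hf (i + 1) (by omega)) (fun i hi => hg (i + 1) (by omega)) hrest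
    intro i hi
    match i with
    | 0 => exact h0
    | j + 1 => exact this j (by omega)

lemma key_s3 (n : ℕ) (f g : Fin n → ℕ) (hf : ∀ i, f i ≤ 1) (hg : ∀ i, g i ≤ 1)
    (h : ∑ i : Fin n, (f i : ℝ) / 2 ^ (i.1 + 1) = ∑ i : Fin n, (g i : ℝ) / 2 ^ (i.1 + 1)) :
    f = g := by
  set F : ℕ → ℕ := fun i => if h : i < n then f ⟨i, h⟩ else 0 with hF
  set G : ℕ → ℕ := fun i => if h : i < n then g ⟨i, h⟩ else 0 with hG
  have bridge : ∀ (φ : Fin n → ℕ) (Φ : ℕ → ℕ),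
      (∀ i : Fin n, Φ i.1 = φ i) →
      ((∑ i ∈ Finset.range n, Φ i * 2 ^ (n - (i + 1)) : ℕ) : ℝ)
        = 2 ^ n * ∑ i : Fin n, (φ i : ℝ) / 2 ^ (i.1 + 1) := by
    intro φ Φ hΦ
    have e1 : ∑ i : Fin n, (φ i : ℝ) / 2 ^ (i.1 + 1)
        = ∑ i ∈ Finset.range n, (Φ i : ℝ) / 2 ^ (i + 1) := by
      rw [← Fin.sum_univ_eq_sum_range (fun i => (Φ i : ℝ) / 2 ^ (i + 1)) n]
      refine Finset.sum_congr rfl fun i _ => ?_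
      rw [hΦ i]
    rw [e1, Finset.mul_sum]
    push_cast
    refine Finset.sum_congr rfl fun i hi => ?_
    rw [Finset.mem_range] at hi
    have h2 : (2 : ℝ) ^ (n - (i + 1)) * 2 ^ (i + 1) = 2 ^ n := by
      rw [← pow_add]
      congr 1
      omega
    have h3 : (2 : ℝ) ^ (i + 1) ≠ 0 := by positivity
    have h4 : (2 : ℝ) ^ n / 2 ^ (i + 1) = 2 ^ (n - (i + 1)) := by
      rw [← h2]
      field_simp
    have h5 : (2 : ℝ) ^ n * ((Φ i : ℝ) / 2 ^ (i + 1)) = (Φ i : ℝ) * (2 ^ n / 2 ^ (i + 1)) := by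
      ring
    rw [h5, h4]
  have hFf : ∀ i : Fin n, F i.1 = f i := by
    intro i; simp [hF, i.2]
  have hGg : ∀ i : Fin n, G i.1 = g i := by
    intro i; simp [hG, i.2]
  have hN : ∑ i ∈ Finset.range n, F i * 2 ^ (n - (i + 1))
      = ∑ i ∈ Finset.range n, G i * 2 ^ (n - (i + 1)) := by
    have := bridge f F hFf
    rw [h, ← bridge g G hGg] at this
    exact_mod_cast this
  have := binuniq n F G
    (fun i hi => by simpa [hF, hi] using hf ⟨i, hi⟩)
    (fun i hi => by simpa [hG, hi] using hg ⟨i, hi⟩) hN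
  funext i
  have := this i.1 i.2
  rwa [hFf i, hGg i] at this

theorem stmt3 (s t : ℝ) (hs : Irrational s) (ht : Irrational t)
    (h : ∃ (n : ℕ), 1 ≤ n ∧ ∃ ω₁ δ₁ δ₁' ω₂ δ₂ δ₂' : Fin n → ℕ,
      (∀ i, ω₁ i ≤ 1) ∧ (∀ i, δ₁ i ≤ 1) ∧ (∀ i, δ₁' i ≤ 1) ∧
      (∀ i, ω₂ i ≤ 1) ∧ (∀ i, δ₂ i ≤ 1) ∧ (∀ i, δ₂' i ≤ 1) ∧
      ¬(ω₁ = ω₂ ∧ δ₁ = δ₂ ∧ δ₁' = δ₂') ∧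
      ∑ i, (ω₁ i : ℝ) / 2 ^ (i.1 + 1) + s * ∑ i, (δ₁ i : ℝ) / 2 ^ (i.1 + 1)
        + t * ∑ i, (δ₁' i : ℝ) / 2 ^ (i.1 + 1)
      = ∑ i, (ω₂ i : ℝ) / 2 ^ (i.1 + 1) + s * ∑ i, (δ₂ i : ℝ) / 2 ^ (i.1 + 1)
        + t * ∑ i, (δ₂' i : ℝ) / 2 ^ (i.1 + 1)) :
    ∃ a b c d : ℤ, a ≠ 0 ∧ b ≠ 0 ∧ d ≠ 0 ∧ t = ((a : ℝ) / b) * s + (c : ℝ) / d := by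
  obtain ⟨n, hn, ω₁, δ₁, δ₁', ω₂, δ₂, δ₂', h1, h2, h3, h4, h5, h6, h7, h8⟩ := h
  set q : (Fin n → ℕ) → ℚ := fun f => ∑ i, (f i : ℚ) / 2 ^ (i.1 + 1) with hqdef
  have hq : ∀ f : Fin n → ℕ, ((q f : ℚ) : ℝ) = ∑ i, (f i : ℝ) / 2 ^ (i.1 + 1) := by
    intro f
    rw [hqdef]
    push_cast
    rfl
  set A : ℚ := q ω₁ - q ω₂ with hA
  set B : ℚ := q δ₁ - q δ₂ with hB
  set C : ℚ := q δ₁' - q δ₂' with hC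
  have heq : (A : ℝ) + s * (B : ℝ) + t * (C : ℝ) = 0 := by
    rw [← hq ω₁, ← hq ω₂, ← hq δ₁, ← hq δ₂, ← hq δ₁', ← hq δ₂'] at h8
    push_cast [hA, hB, hC]
    ring_nf
    ring_nf at h8
    linarith
  by_cases hCz : C = 0
  · have hCz' : (C : ℝ) = 0 := by exact_mod_cast hCz
    by_cases hBz : B = 0
    · exfalso
      have hBz' : (B : ℝ) = 0 := by exact_mod_cast hBz
      have hAz : A = 0 := by
        have : (A : ℝ) = 0 := by rw [hBz', hCz'] at heq; linarith
        exact_mod_cast this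
      apply h7
      refine ⟨?_, ?_, ?_⟩
      · apply key_s3 n ω₁ ω₂ h1 h4
        rw [← hq ω₁, ← hq ω₂]
        have : q ω₁ = q ω₂ := by
          have := sub_eq_zero.mp hAz
          exact this
        rw [this]
      · apply key_s3 n δ₁ δ₂ h2 h5
        rw [← hq δ₁, ← hq δ₂]
        have : q δ₁ = q δ₂ := sub_eq_zero.mp hBz
        rw [this]
      · apply key_s3 n δ₁' δ₂' h3 h6
        rw [← hq δ₁', ← hq δ₂']
        have : q δ₁' = q δ₂' := sub_eq_zero.mp hCz
        rw [this]
    · exfalso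
      apply hs
      refine ⟨-A / B, ?_⟩
      have hB' : (B : ℝ) ≠ 0 := by exact_mod_cast hBz
      push_cast
      rw [hCz'] at heq
      rw [div_eq_iff hB']
      linear_combination -heq
  · have hC' : (C : ℝ) ≠ 0 := by exact_mod_cast hCz
    by_cases hBz : B = 0
    · exfalso
      apply ht
      refine ⟨-A / C, ?_⟩
      have hBz' : (B : ℝ) = 0 := by exact_mod_cast hBz
      push_cast
      rw [hBz'] at heq
      rw [div_eq_iff hC']
      linear_combination -heq
    · refine ⟨(-B / C).num, (-B / C).den, (-A / C).num, (-A / C).den, ?_, ?_, ?_, ?_⟩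
      · rw [Rat.num_ne_zero]
        exact div_ne_zero (neg_ne_zero.mpr hBz) hCz
      · exact_mod_cast (-B / C).den_nz
      · exact_mod_cast (-A / C).den_nz
      · have e1 : ((((-B / C).num : ℤ) : ℝ) / (((-B / C).den : ℤ) : ℝ)) = ((-B / C : ℚ) : ℝ) := by
          rw [Rat.cast_def]
          push_cast
          ring
        have e2 : ((((-A / C).num : ℤ) : ℝ) / (((-A / C).den : ℤ) : ℝ)) = ((-A / C : ℚ) : ℝ) := by
          rw [Rat.cast_def]
          push_cast
          ring
        rw [e1, e2]
        push_cast
        have e3 : (-(B : ℝ) / C) * s + (-(A : ℝ) / C) = (-(B : ℝ) * s + -(A : ℝ)) / C := by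
          ring
        rw [e3, eq_div_iff hC']
        linear_combination heq
end

section
/- Let t be irrational in (0,1) with continued fraction denominators q'ₘ, and for each m ≥ 2 let Mₘ ∈ ℕ satisfy 2^{Mₘ−1} − 1 ≤ q'ₘ < 2^{Mₘ} − 1. Then for every m ≥ 2 and every pair (p,q) ∈ ℤ × ℕ with 1 ≤ q < q'ₘ, one has |t − p/q| > 1/2^{2Mₘ+1}. -/
open GenContFract

private lemma stmt6_not_term {t : ℝ} (ht : Irrational t) (n : ℕ) :
    ¬(GenContFract.of t).TerminatedAt n := by
  intro h
  obtain ⟨q, hq⟩ := (GenContFract.terminates_iff_rat t).mp ⟨n, h⟩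
  exact ht ⟨q, hq.symm⟩

private lemma stmt6_s_some {t : ℝ} (ht : Irrational t) (n : ℕ) :
    ∃ gp, (GenContFract.of t).s.get? n = some gp :=
  Option.ne_none_iff_exists'.1 (stmt6_not_term ht n)

private lemma stmt6_one_le_dens {t : ℝ} (ht : Irrational t) :
    ∀ n, (1 : ℝ) ≤ (GenContFract.of t).dens n := by
  intro n
  induction n with
  | zero => simp
  | succ n ih =>
    obtain ⟨gp, hs⟩ := stmt6_s_some ht n
    have h1 : gp.b * (GenContFract.of t).dens n ≤ (GenContFract.of t).dens (n + 1) :=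
      le_of_succ_get?_den (partDen_eq_s_b hs)
    have h2 : (1 : ℝ) ≤ gp.b := of_one_le_get?_partDen (partDen_eq_s_b hs)
    nlinarith

private lemma stmt6_int_vals {t : ℝ} (ht : Irrational t) :
    ∀ n, ∃ a b : ℤ, (GenContFract.of t).nums n = (a : ℝ) ∧
      (GenContFract.of t).dens n = (b : ℝ) := by
  intro n
  induction n using Nat.strong_induction_on with
  | _ n ih =>
    match n with
    | 0 => exact ⟨⌊t⌋, 1, by simp [of_h_eq_floor], by simp⟩
    | 1 =>
      obtain ⟨gp, hs⟩ := stmt6_s_some ht 0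
      obtain ⟨ha, z, hz⟩ := of_partNum_eq_one_and_exists_int_partDen_eq hs
      refine ⟨z * ⌊t⌋ + 1, z, ?_, ?_⟩
      · rw [first_num_eq hs, ha, hz, of_h_eq_floor]; push_cast; ring
      · rw [first_den_eq hs, hz]
    | (n + 2) =>
      obtain ⟨a, b, ha, hb⟩ := ih n (by omega)
      obtain ⟨a', b', ha', hb'⟩ := ih (n + 1) (by omega)
      obtain ⟨gp, hs⟩ := stmt6_s_some ht (n + 1)
      obtain ⟨hga, z, hz⟩ := of_partNum_eq_one_and_exists_int_partDen_eq hs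
      refine ⟨z * a' + a, z * b' + b, ?_, ?_⟩
      · rw [nums_recurrence hs ha ha', hga, hz]; push_cast; ring
      · rw [dens_recurrence hs hb hb', hga, hz]; push_cast; ring

theorem stmt6 (t : ℝ) (ht : Irrational t) (ht1 : t ∈ Set.Ioo (0:ℝ) 1) (M : ℕ → ℕ)
    (hM : ∀ m, 2 ≤ m → ((2:ℝ) ^ (M m - 1) - 1 ≤ (GenContFract.of t).dens m ∧
      (GenContFract.of t).dens m < 2 ^ (M m) - 1)) :
    ∀ m, 2 ≤ m → ∀ p : ℤ, ∀ q : ℕ, 1 ≤ q → (q : ℝ) < (GenContFract.of t).dens m →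
      1 / 2 ^ (2 * M m + 1) < |t - (p : ℝ) / q| := by
  intro m hm p q hq1 hqm
  by_contra hcon
  push_neg at hcon
  have hq0 : (0 : ℝ) < q := by exact_mod_cast hq1
  have hP0 : (0 : ℝ) < 2 ^ M m := by positivity
  have hqP : (q : ℝ) < 2 ^ M m - 1 := hqm.trans (hM m hm).2
  -- the rational approximation
  set r : ℚ := (p : ℚ) / (q : ℚ) with hr
  have hrcast : (r : ℝ) = (p : ℝ) / q := by push_cast [hr]; ring
  have hrden : (r.den : ℝ) ≤ q := by
    have h1 : (r.den : ℤ) ∣ (q : ℤ) := by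
      have h2 : r = Rat.divInt p (q : ℤ) := by rw [hr, Rat.divInt_eq_div]; push_cast; ring
      rw [h2]
      exact Rat.den_dvd p q
    have := Int.le_of_dvd (by exact_mod_cast hq1) h1
    exact_mod_cast this
  have hrden1 : (1 : ℝ) ≤ r.den := by exact_mod_cast r.pos
  have hpow : (2 : ℝ) ^ (2 * M m + 1) = 2 * (2 ^ M m) ^ 2 := by
    rw [pow_succ, two_mul, pow_add]; ring
  -- Legendre's theorem applies
  have hleg : |t - (r : ℝ)| < 1 / (2 * (r.den : ℝ) ^ 2) := by
    rw [hrcast]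
    refine hcon.trans_lt ?_
    rw [hpow]
    apply one_div_lt_one_div_of_lt (by positivity)
    nlinarith
  obtain ⟨n, hn⟩ := Real.exists_convs_eq_rat hleg
  -- integer values of numerator and denominator
  obtain ⟨a, b, ha, hb⟩ := stmt6_int_vals ht n
  obtain ⟨a', b', ha', hb'⟩ := stmt6_int_vals ht (n + 1)
  have hbR1 : (1 : ℝ) ≤ b := hb ▸ stmt6_one_le_dens ht n
  have hbR1' : (1 : ℝ) ≤ b' := hb' ▸ stmt6_one_le_dens ht (n + 1)
  have hb0 : (0 : ℝ) < b := by linarith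
  have hb0' : (0 : ℝ) < b' := by linarith
  -- determinant formula
  have hdetR : (GenContFract.of t).nums n * (GenContFract.of t).dens (n + 1) -
      (GenContFract.of t).dens n * (GenContFract.of t).nums (n + 1) = (-1) ^ (n + 1) :=
    SimpContFract.determinant (s := ⟨GenContFract.of t, GenContFract.of_isSimpContFract t⟩)
      (stmt6_not_term ht n)
  have hdetZ : a * b' - b * a' = (-1) ^ (n + 1) := by
    have : (a : ℝ) * b' - b * a' = (-1) ^ (n + 1) := by
      rw [← ha, ← hb, ← ha', ← hb']; exact hdetR
    exact_mod_cast this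
  -- coprimality of a and b
  have hcop : IsCoprime a b := by
    rcases neg_one_pow_eq_or ℤ (n + 1) with h | h <;> rw [h] at hdetZ
    · exact ⟨b', -a', by linarith⟩
    · exact ⟨-b', a', by linarith⟩
  -- the convergent equals r, so b divides q
  have hconv : (GenContFract.of t).convs n = (a : ℝ) / b := by
    rw [conv_eq_num_div_den, ha, hb]
  have haq : (a : ℝ) * q = p * b := by
    have h1 : (a : ℝ) / b = (p : ℝ) / q := by rw [← hconv, hn, hrcast]
    field_simp at h1
    linarith
  have haqZ : a * (q : ℤ) = p * b := by exact_mod_cast haq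
  have hbq : b ∣ (q : ℤ) := by
    refine (hcop.symm).dvd_of_dvd_mul_left (⟨p, by linarith [haqZ]⟩ : b ∣ a * (q : ℤ))
  have hbleq : (b : ℝ) ≤ q := by
    have := Int.le_of_dvd (by exact_mod_cast hq1) hbq
    exact_mod_cast this
  -- hence n < m and the denominators are bounded
  have hmono : Monotone fun k => (GenContFract.of t).dens k :=
    monotone_nat_of_le_succ fun k => of_den_mono
  have hnm : n < m := by
    by_contra hnm
    push_neg at hnm
    have := hmono hnm
    simp only at this
    rw [hb] at this
    linarith
  have hb'P : (b' : ℝ) < 2 ^ M m - 1 := by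
    have h1 : (GenContFract.of t).dens (n + 1) ≤ (GenContFract.of t).dens m := hmono hnm
    rw [hb'] at h1
    exact h1.trans_lt (hM m hm).2
  have hbP : (b : ℝ) < 2 ^ M m - 1 := lt_of_le_of_lt hbleq hqP
  -- lower bound on |t - convs n|
  obtain ⟨gp, hs⟩ := stmt6_s_some ht (n + 1)
  have hga : gp.a = 1 := (of_partNum_eq_one_and_exists_int_partDen_eq hs).1
  have hgb : (1 : ℝ) ≤ gp.b := of_one_le_get?_partDen (partDen_eq_s_b hs)
  have hrec : (GenContFract.of t).dens (n + 2) =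
      gp.b * (GenContFract.of t).dens (n + 1) + gp.a * (GenContFract.of t).dens n :=
    dens_recurrence hs rfl rfl
  have hd2 : 2 * (b : ℝ) ≤ (GenContFract.of t).dens (n + 2) := by
    rw [hrec, hga, hb, hb']
    have hbb' : (b : ℝ) ≤ b' := by
      have := of_den_mono (v := t) (n := n); rw [hb, hb'] at this; exact this
    nlinarith
  have hd20 : (0 : ℝ) < (GenContFract.of t).dens (n + 2) := by linarith
  have habs' : |t - (GenContFract.of t).convs (n + 1)| ≤
      1 / ((GenContFract.of t).dens (n + 1) * (GenContFract.of t).dens (n + 2)) :=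
    abs_sub_convs_le (stmt6_not_term ht (n + 1))
  have habs'2 : |t - (GenContFract.of t).convs (n + 1)| ≤ 1 / (2 * b * b') := by
    refine habs'.trans ?_
    rw [hb']
    have hd20' : (0 : ℝ) ≤ b' := by linarith
    apply one_div_le_one_div_of_le (by positivity)
    calc 2 * (b : ℝ) * b' = (b' : ℝ) * (2 * b) := by ring
      _ ≤ b' * (GenContFract.of t).dens (n + 2) := mul_le_mul_of_nonneg_left hd2 hd20'
  have hdiff : |(GenContFract.of t).convs n - (GenContFract.of t).convs (n + 1)| =
      1 / (b * b') := by
    have h1 : (GenContFract.of t).convs n - (GenContFract.of t).convs (n + 1) =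
        ((-1 : ℝ) ^ (n + 1)) / (b * b') := by
      rw [conv_eq_num_div_den, conv_eq_num_div_den, ha, hb, ha', hb',
        div_sub_div _ _ hb0.ne' hb0'.ne']
      congr 1
      rw [← ha, ← hb, ← ha', ← hb']
      exact hdetR
    rw [h1, abs_div, abs_pow, abs_neg, abs_one, one_pow, abs_of_pos (by positivity)]
  have hlow : 1 / (2 * (b : ℝ) * b') ≤ |t - (GenContFract.of t).convs n| := by
    have h1 : |(GenContFract.of t).convs n - (GenContFract.of t).convs (n + 1)| ≤
        |t - (GenContFract.of t).convs n| + |t - (GenContFract.of t).convs (n + 1)| := by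
      calc |(GenContFract.of t).convs n - (GenContFract.of t).convs (n + 1)|
          ≤ |(GenContFract.of t).convs n - t| + |t - (GenContFract.of t).convs (n + 1)| :=
            abs_sub_le _ _ _
        _ = |t - (GenContFract.of t).convs n| + |t - (GenContFract.of t).convs (n + 1)| := by
            rw [abs_sub_comm]
    have h3 : 1 / ((b : ℝ) * b') - 1 / (2 * b * b') = 1 / (2 * b * b') := by
      field_simp
      ring
    linarith [h1, habs'2, hdiff, h3]
  -- contradiction
  have hup : |t - (GenContFract.of t).convs n| ≤ 1 / 2 ^ (2 * M m + 1) := by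
    rw [hn, hrcast]; exact hcon
  have hup2 : 1 / (2 * (b : ℝ) * b') ≤ 1 / 2 ^ (2 * M m + 1) := le_trans hlow hup
  clear hup hlow hrec habs' habs'2 hdiff hconv hdetR hcon hleg hqm hM hd2 hd20 hmono hn
  have hbP' : (b : ℝ) < 2 ^ M m := by linarith
  have hb'P' : (b' : ℝ) < 2 ^ M m := by linarith
  have hmul : (b : ℝ) * b' < 2 ^ M m * 2 ^ M m :=
    mul_lt_mul'' hbP' hb'P' (le_of_lt hb0) (le_of_lt hb0')
  have hfin : 1 / (2 * (2 ^ M m : ℝ) ^ 2) < 1 / (2 * (b : ℝ) * b') := by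
    apply one_div_lt_one_div_of_lt (by positivity)
    have hsq : ((2 : ℝ) ^ M m) ^ 2 = 2 ^ M m * 2 ^ M m := sq (2 ^ M m)
    rw [hsq]
    linarith
  rw [hpow] at hup2
  linarith
end

section
/- Suppose s, t are irrational numbers, t = (a/b)s + c/d with integers a ≠ 0, b ≠ 0, d ≠ 0, and suppose there are strictly increasing sequences of positive integers (qₘ) and (q'ₘ) and integers (pₘ) such that |s − pₘ/qₘ| ≤ 8^{−Mₘ} for all m, where qₘ ≤ 2^{Lₘ}, q'ₘ ≥ 2^{Mₘ−4}, 2Lₘ < Mₘ for all m ≥ 2, Lₘ → ∞, and |t − p/q| > 2^{−(2Mₘ+1)} for all integers p and all positive integers q < q'ₘ. Then a contradiction follows; i.e., no such configuration exists. -/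
theorem stmt7 (s t : ℝ) (hs : Irrational s) (ht : Irrational t)
    (a b c d : ℤ) (ha : a ≠ 0) (hb : b ≠ 0) (hd : d ≠ 0)
    (hrel : t = ((a : ℝ) / b) * s + (c : ℝ) / d)
    (q q' : ℕ → ℕ) (p : ℕ → ℤ) (L M : ℕ → ℕ)
    (hqmono : StrictMono q) (hq'mono : StrictMono q')
    (hqpos : ∀ m, 0 < q m) (hq'pos : ∀ m, 0 < q' m)
    (happrox : ∀ m, 2 ≤ m → |s - (p m : ℝ) / q m| ≤ (8 : ℝ) ^ (-(M m : ℤ)))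
    (hqL : ∀ m, 2 ≤ m → (q m : ℝ) ≤ 2 ^ L m)
    (hq'M : ∀ m, 2 ≤ m → (2 : ℝ) ^ ((M m : ℤ) - 4) ≤ q' m)
    (hLM : ∀ m, 2 ≤ m → 2 * L m < M m)
    (hLtop : Filter.Tendsto L Filter.atTop Filter.atTop)
    (htapprox : ∀ m, 2 ≤ m → ∀ pp : ℤ, ∀ qq : ℕ, 0 < qq → qq < q' m →
      (2 : ℝ) ^ (-(2 * (M m : ℤ) + 1)) < |t - (pp : ℝ) / qq|) :
    False := by
  classical
  have hbd0 : b * d ≠ 0 := mul_ne_zero hb hd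
  set N : ℕ := a.natAbs + 8 * (b * d).natAbs with hNdef
  have haN : a.natAbs ≤ 2 ^ N :=
    le_trans (Nat.le_add_right _ _) (Nat.lt_two_pow_self (n := N)).le
  have hbdN : 8 * (b * d).natAbs < 2 ^ N :=
    lt_of_le_of_lt (Nat.le_add_left _ _) (Nat.lt_two_pow_self (n := N))
  obtain ⟨m, hLN, hm2⟩ :=
    ((hLtop.eventually_ge_atTop N).and (Filter.eventually_ge_atTop 2)).exists
  have hM := hLM m hm2
  have hqm := hqpos m
  have hNL : (N : ℤ) ≤ (L m : ℤ) := by exact_mod_cast hLN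
  set Q : ℕ := (b * d).natAbs * q m with hQdef
  have hQpos : 0 < Q := Nat.mul_pos (Int.natAbs_pos.mpr hbd0) hqm
  -- Q < q' m
  have h2ne : (2 : ℝ) ≠ 0 := by norm_num
  have hQlt : Q < q' m := by
    have h1 : ((b * d).natAbs : ℝ) * 8 < (2 : ℝ) ^ (L m : ℤ) := by
      have h0 : ((8 * (b * d).natAbs : ℕ) : ℝ) < ((2 ^ N : ℕ) : ℝ) := by
        exact_mod_cast hbdN
      calc ((b * d).natAbs : ℝ) * 8 = ((8 * (b * d).natAbs : ℕ) : ℝ) := by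
            push_cast; ring
        _ < ((2 ^ N : ℕ) : ℝ) := h0
        _ = (2 : ℝ) ^ (N : ℤ) := by push_cast [zpow_natCast]; norm_num
        _ ≤ (2 : ℝ) ^ (L m : ℤ) := zpow_le_zpow_right₀ (by norm_num) hNL
    have h2q : (q m : ℝ) ≤ (2 : ℝ) ^ (L m : ℤ) := by
      rw [zpow_natCast]; exact hqL m hm2
    have hexp : (L m : ℤ) + (L m : ℤ) - 3 ≤ (M m : ℤ) - 4 := by
      have : 2 * L m < M m := hM; omega
    have h3 : (Q : ℝ) < (2 : ℝ) ^ ((M m : ℤ) - 4) := by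
      have hLpos : (0 : ℝ) < (2 : ℝ) ^ (L m : ℤ) := by positivity
      calc (Q : ℝ) = ((b * d).natAbs : ℝ) * (q m : ℝ) := Nat.cast_mul _ _
        _ ≤ ((b * d).natAbs : ℝ) * (2 : ℝ) ^ (L m : ℤ) :=
            mul_le_mul_of_nonneg_left h2q (by positivity)
        _ < ((2 : ℝ) ^ (L m : ℤ) / 8) * (2 : ℝ) ^ (L m : ℤ) := by
            have hnn : (0 : ℝ) ≤ ((b * d).natAbs : ℝ) := by positivity
            nlinarith [h1, hLpos]
        _ = (2 : ℝ) ^ ((L m : ℤ) + (L m : ℤ) - 3) := by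
            rw [zpow_sub₀ h2ne, zpow_add₀ h2ne]
            norm_num
            ring
        _ ≤ (2 : ℝ) ^ ((M m : ℤ) - 4) := zpow_le_zpow_right₀ (by norm_num) hexp
    exact_mod_cast lt_of_lt_of_le h3 (hq'M m hm2)
  -- the rational approximation of t
  let num : ℤ := a * p m * d + c * b * (q m : ℤ)
  let pp : ℤ := (b * d).sign * num
  have hnumdef : num = a * p m * d + c * b * (q m : ℤ) := rfl
  have hppdef : pp = (b * d).sign * num := rfl
  have hsign : (b * d).sign * (b * d) = ((b * d).natAbs : ℤ) := by
    rcases lt_trichotomy (b * d) 0 with h | h | h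
    · rw [Int.sign_eq_neg_one_of_neg h]; omega
    · exact absurd h hbd0
    · rw [Int.sign_eq_one_of_pos h]; omega
  have hintEq : pp * (b * d * (q m : ℤ)) = num * (Q : ℤ) := by
    have : pp * (b * d * (q m : ℤ)) = num * ((b * d).sign * (b * d)) * (q m : ℤ) := by
      rw [hppdef]; ring
    rw [this, hsign, hQdef]; push_cast; ring
  have hbR : (b : ℝ) ≠ 0 := Int.cast_ne_zero.mpr hb
  have hdR : (d : ℝ) ≠ 0 := Int.cast_ne_zero.mpr hd
  have hqR : (q m : ℝ) ≠ 0 := Nat.cast_ne_zero.mpr hqm.ne'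
  have hQR : (Q : ℝ) ≠ 0 := Nat.cast_ne_zero.mpr hQpos.ne'
  have hppQ : (pp : ℝ) / (Q : ℝ) = (num : ℝ) / ((b : ℝ) * d * (q m : ℝ)) := by
    rw [div_eq_div_iff hQR (mul_ne_zero (mul_ne_zero hbR hdR) hqR)]
    exact_mod_cast congrArg (Int.cast : ℤ → ℝ) hintEq
  have hform : (num : ℝ) / ((b : ℝ) * d * (q m : ℝ))
      = ((a : ℝ) / b) * ((p m : ℝ) / (q m : ℝ)) + (c : ℝ) / d := by
    rw [hnumdef]
    push_cast
    field_simp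
  have hdiff : t - (pp : ℝ) / (Q : ℝ) = ((a : ℝ) / b) * (s - (p m : ℝ) / (q m : ℝ)) := by
    rw [hrel, hppQ, hform]; ring
  -- bound the error
  have h8 : (8 : ℝ) ^ (-(M m : ℤ)) = (2 : ℝ) ^ (-(3 * (M m : ℤ))) := by
    have : (8 : ℝ) = (2 : ℝ) ^ (3 : ℤ) := by norm_num
    rw [this, ← zpow_mul]
    ring_nf
  have habR : |(a : ℝ) / b| ≤ (2 : ℝ) ^ ((M m : ℤ) - 1) := by
    have h1b : (1 : ℝ) ≤ |(b : ℝ)| := by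
      have := Int.one_le_abs hb
      calc (1 : ℝ) ≤ ((|b| : ℤ) : ℝ) := by exact_mod_cast this
        _ = |(b : ℝ)| := by push_cast; ring
    have h1 : |(a : ℝ) / b| ≤ |(a : ℝ)| := by
      rw [abs_div]
      exact div_le_self (abs_nonneg _) h1b
    have h2 : |(a : ℝ)| ≤ (2 : ℝ) ^ (N : ℤ) := by
      calc |(a : ℝ)| = ((a.natAbs : ℕ) : ℝ) := by
            rw [← Int.cast_abs, Int.abs_eq_natAbs, Int.cast_natCast]
        _ ≤ ((2 ^ N : ℕ) : ℝ) := by exact_mod_cast haN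
        _ = (2 : ℝ) ^ (N : ℤ) := by push_cast [zpow_natCast]; norm_num
    have h3 : (N : ℤ) ≤ (M m : ℤ) - 1 := by
      have : 2 * L m < M m := hM; omega
    calc |(a : ℝ) / b| ≤ (2 : ℝ) ^ (N : ℤ) := h1.trans h2
      _ ≤ (2 : ℝ) ^ ((M m : ℤ) - 1) := zpow_le_zpow_right₀ (by norm_num) h3
  have habs : |t - (pp : ℝ) / (Q : ℝ)| ≤ (2 : ℝ) ^ (-(2 * (M m : ℤ) + 1)) := by
    rw [hdiff, abs_mul]
    have hsb : |s - (p m : ℝ) / (q m : ℝ)| ≤ (2 : ℝ) ^ (-(3 * (M m : ℤ))) := by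
      rw [← h8]; exact happrox m hm2
    calc |(a : ℝ) / b| * |s - (p m : ℝ) / (q m : ℝ)|
        ≤ (2 : ℝ) ^ ((M m : ℤ) - 1) * (2 : ℝ) ^ (-(3 * (M m : ℤ))) :=
          mul_le_mul habR hsb (abs_nonneg _) (by positivity)
      _ = (2 : ℝ) ^ ((M m : ℤ) - 1 + -(3 * (M m : ℤ))) := (zpow_add₀ h2ne _ _).symm
      _ = (2 : ℝ) ^ (-(2 * (M m : ℤ) + 1)) := by ring_nf
  have := htapprox m hm2 pp Q hQpos hQlt
  exact absurd habs (not_le.mpr this)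
end

section
/- There exists an IFS Φ of contracting similarities on ℝ without exact overlaps such that lim_{n→∞} (log Δₙ)/n = −∞, where Δₙ = min{d(α,β) : α, β ∈ Iⁿ, α ≠ β} and d(α,β) = |φ_α(0) − φ_β(0)| if the contraction ratios r_α, r_β are equal and d(α,β) = ∞ otherwise. -/
noncomputable def compIFS {k : ℕ} (r c : Fin k → ℝ) (l : List (Fin k)) : ℝ → ℝ :=
  l.foldr (fun i g => (fun x => r i * x + c i) ∘ g) id

noncomputable def ratioIFS {k : ℕ} (r : Fin k → ℝ) (l : List (Fin k)) : ℝ :=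
  (l.map r).prod

noncomputable def DeltaIFS {k : ℕ} (r c : Fin k → ℝ) (n : ℕ) : ℝ :=
  sInf {x : ℝ | ∃ α β : List (Fin k), α.length = n ∧ β.length = n ∧ α ≠ β ∧
    ratioIFS r α = ratioIFS r β ∧ x = |compIFS r c α 0 - compIFS r c β 0|}

namespace Stmt9

/-- Doubly exponential digit positions. -/
def M (l : ℕ) : ℕ := 2 ^ (2 ^ l)

lemma M_succ (l : ℕ) : M (l + 1) = M l ^ 2 := by
  simp [M, pow_succ, pow_mul]

lemma M_ge (l : ℕ) : l + 2 ≤ M l := by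
  have h := Nat.lt_two_pow_self (n := l)
  have h2 : l + 1 ≤ 2 ^ l := h
  calc l + 2 ≤ 2^l + 2^l := by omega
    _ = 2^(l+1) := by ring
    _ ≤ 2^(2^l) := Nat.pow_le_pow_right (by norm_num) h2

lemma M_gap (l : ℕ) : M l + (l + 2) ≤ M (l + 1) := by
  have h := M_ge l
  have : M (l+1) = M l * M l := by rw [M_succ]; ring
  nlinarith

lemma M_strictMono : StrictMono M := by
  apply strictMono_nat_of_lt_succ
  intro l
  have := M_gap l
  omega

lemma M_add_le (x d : ℕ) : M x + d ≤ M (x + d) := by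
  induction d with
  | zero => simp
  | succ d ih =>
    have h := M_gap (x + d)
    have h2 : x + (d + 1) = (x + d) + 1 := by omega
    rw [h2]
    omega

noncomputable def w (l : ℕ) : ℝ := (1/8 : ℝ) ^ (M l)

lemma w_pos (l : ℕ) : 0 < w l := by unfold w; positivity

lemma w_le_geom (l : ℕ) : w l ≤ (1/8 : ℝ) ^ l := by
  apply pow_le_pow_of_le_one (by norm_num) (by norm_num)
  have := M_ge l; omega

lemma w_antitone {a b : ℕ} (h : a ≤ b) : w b ≤ w a :=
  pow_le_pow_of_le_one (by norm_num) (by norm_num) (M_strictMono.monotone h)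

lemma summable_w : Summable w := by
  apply Summable.of_nonneg_of_le (fun l => (w_pos l).le) w_le_geom
  exact summable_geometric_of_lt_one (by norm_num) (by norm_num)

lemma summable_w_comp (g : ℕ → ℕ) (hg : Function.Injective g) :
    Summable (fun i => w (g i)) :=
  summable_w.comp_injective hg

/-- tail sums of the θ-series with parity ε starting at index J -/
noncomputable def T (ε J : ℕ) : ℝ := ∑' i, w (2 * (i + J) + ε)

lemma summable_T (ε J : ℕ) : Summable (fun i => w (2 * (i + J) + ε)) := by
  apply summable_w_comp
  intro a b h
  simp only at h
  omega

noncomputable def th (ε : ℕ) : ℝ := ∑' i, w (2 * i + ε)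

lemma th_split (ε J : ℕ) :
    th ε = (∑ i ∈ Finset.range J, w (2 * i + ε)) + T ε J := by
  have h := Summable.sum_add_tsum_nat_add (f := fun i => w (2 * i + ε)) J
    (summable_w_comp _ (by intro a b h; simp only at h; omega))
  rw [th, ← h]
  rfl

lemma T_peel (ε J : ℕ) : T ε J = w (2 * J + ε) + T ε (J + 1) := by
  rw [T, Summable.tsum_eq_zero_add (summable_T ε J)]
  congr 1
  · norm_num
  · rw [T]
    apply tsum_congr
    intro i
    congr 1
    omega

lemma T_pos (ε J : ℕ) : 0 < T ε J := by
  apply Summable.tsum_pos (summable_T ε J) (fun i => (w_pos _).le) 0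
  exact w_pos _

lemma T_le (ε J : ℕ) : T ε J ≤ 2 * w (2 * J + ε) := by
  have h1 : ∀ i, w (2 * (i + J) + ε) ≤ w (2 * J + ε) * (1/8 : ℝ) ^ i := by
    intro i
    have hM : M (2 * J + ε) + i ≤ M (2 * (i + J) + ε) := by
      have := M_add_le (2 * J + ε) (2 * i)
      have h2 : M (2 * J + ε + 2 * i) = M (2 * (i + J) + ε) := by ring_nf
      omega
    calc w (2 * (i + J) + ε) ≤ (1/8:ℝ) ^ (M (2 * J + ε) + i) :=
          pow_le_pow_of_le_one (by norm_num) (by norm_num) hM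
      _ = w (2 * J + ε) * (1/8:ℝ) ^ i := by rw [pow_add]; rfl
  calc T ε J ≤ ∑' i, w (2 * J + ε) * (1/8:ℝ) ^ i := by
        apply Summable.tsum_le_tsum h1 (summable_T ε J)
        exact (summable_geometric_of_lt_one (by norm_num) (by norm_num)).mul_left _
    _ = w (2 * J + ε) * (1 - 1/8)⁻¹ := by
        rw [tsum_mul_left, tsum_geometric_of_lt_one (by norm_num) (by norm_num)]
    _ ≤ 2 * w (2 * J + ε) := by
        have := w_pos (2 * J + ε); nlinarith

end Stmt9
namespace Stmt9

/-- the contraction ratios: all 1/8 -/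
noncomputable def rr : Fin 4 → ℝ := fun _ => 1/8

/-- the translations -/
noncomputable def cc : Fin 4 → ℝ := ![0, 1, th 0, th 1]

noncomputable def V (l : List (Fin 4)) : ℝ := compIFS rr cc l 0

lemma V_nil : V [] = 0 := rfl

lemma V_cons (a : Fin 4) (l : List (Fin 4)) :
    V (a :: l) = cc a + (1/8) * V l := by
  simp [V, compIFS, rr]
  ring

lemma compIFS_apply (l : List (Fin 4)) (x : ℝ) :
    compIFS rr cc l x = (1/8 : ℝ) ^ l.length * x + V l := by
  induction l with
  | nil => simp [compIFS, V]
  | cons a l ih =>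
    have h1 : compIFS rr cc (a :: l) x = (1/8) * (compIFS rr cc l x) + cc a := by
      simp [compIFS, rr]
    have h2 : V (a :: l) = cc a + (1/8) * V l := V_cons a l
    rw [h1, ih, h2]
    simp [List.length_cons, pow_succ]
    ring

lemma ratio_const (l : List (Fin 4)) : ratioIFS rr l = (1/8 : ℝ) ^ l.length := by
  induction l with
  | nil => simp [ratioIFS]
  | cons a l ih =>
    simp only [ratioIFS, List.map_cons, List.prod_cons] at *
    rw [ih, List.length_cons, pow_succ, rr]
    ring

/-- integer digit coordinates -/
def dd (i : Fin 3) : Fin 4 → ℤ := fun a => if (a : ℕ) = (i : ℕ) + 1 then 1 else 0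

def Pd (i : Fin 3) : List (Fin 4) → ℤ
  | [] => 0
  | a :: l => dd i a * 8 ^ l.length + Pd i l

lemma Pd_nonneg (i : Fin 3) (l : List (Fin 4)) : 0 ≤ Pd i l := by
  induction l with
  | nil => simp [Pd]
  | cons a l ih =>
    have h1 : (0:ℤ) ≤ dd i a := by unfold dd; split <;> norm_num
    have h2 : (0:ℤ) ≤ 8 ^ l.length := by positivity
    simp only [Pd]
    nlinarith

lemma Pd_le (i : Fin 3) (l : List (Fin 4)) : 7 * Pd i l ≤ 8 ^ l.length - 1 := by
  induction l with
  | nil => simp [Pd]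
  | cons a l ih =>
    have h1 : dd i a ≤ 1 := by unfold dd; split <;> norm_num
    have h2 : (0:ℤ) < 8 ^ l.length := by positivity
    simp only [Pd, List.length_cons, pow_succ]
    nlinarith

lemma cc_eq (a : Fin 4) :
    cc a = (dd 0 a : ℝ) + (dd 1 a : ℝ) * th 0 + (dd 2 a : ℝ) * th 1 := by
  fin_cases a <;> simp [cc, dd]

/-- relation between V and the integer coordinates -/
lemma V_rel (l : List (Fin 4)) :
    (8:ℝ) ^ l.length * V l =
      8 * ((Pd 0 l : ℝ) + (Pd 1 l : ℝ) * th 0 + (Pd 2 l : ℝ) * th 1) := by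
  induction l with
  | nil => simp [V_nil, Pd]
  | cons a l ih =>
    have hc := cc_eq a
    simp only [V_cons, List.length_cons, pow_succ, Pd]
    push_cast
    linear_combination ih + (8:ℝ) ^ l.length * 8 * hc

end Stmt9
namespace Stmt9

lemma pow_sub_eq {a b : ℕ} (h : a ≤ b) : (8:ℝ) ^ (b - a) = (1/8)^a * 8^b := by
  have h2 : (8:ℝ)^(b-a) * 8^a = 8^b := by rw [← pow_add, Nat.sub_add_cancel h]
  have h3 : ((8:ℝ)^a) ≠ 0 := by positivity
  field_simp
  rw [← h2, one_div, inv_pow, mul_comm, mul_assoc, mul_inv_cancel₀ h3, mul_one]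

lemma coefBound (Q u v : ℕ) (huv : u < v) (hlt : 2*Q < 2^(M v - M u)) :
    (2*Q:ℝ) * w v < w u := by
  have hMuv : M u ≤ M v := M_strictMono.monotone huv.le
  have h1 : (2*Q:ℝ) < 8^(M v - M u) := by
    have h2 : (2:ℕ)^(M v - M u) ≤ 8^(M v - M u) :=
      Nat.pow_le_pow_left (by norm_num) _
    have : (2*Q) < 8^(M v - M u) := lt_of_lt_of_le hlt h2
    exact_mod_cast this
  have key : (8:ℝ)^(M v - M u) * w v = w u := by
    rw [pow_sub_eq hMuv]
    unfold w
    rw [mul_assoc, ← mul_pow]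
    norm_num
  calc (2*Q:ℝ) * w v < (8:ℝ)^(M v - M u) * w v :=
        mul_lt_mul_of_pos_right h1 (w_pos v)
    _ = w u := key

lemma gap2Q (Q u : ℕ) (h : 2*Q ≤ u + 2) : 2*Q < 2^(M (u+1) - M u) := by
  have g := M_gap u
  have h1 : u + 2 ≤ M (u+1) - M u := by omega
  have h2 : u + 2 < 2^(u+2) := Nat.lt_two_pow_self
  have h3 : (2:ℕ)^(u+2) ≤ 2^(M (u+1) - M u) := Nat.pow_le_pow_right (by norm_num) h1
  omega

lemma absorb (m : ℕ) (K : ℤ) (E : ℝ) (hE0 : E ≠ 0) (hE : |E| < (1/8)^m)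
    (heq : (K : ℝ) + 8^m * E = 0) : False := by
  have h8 : (0:ℝ) < 8^m := by positivity
  have hK : (K:ℝ) = -(8^m * E) := by linarith
  have h1 : |(K:ℝ)| < 1 := by
    rw [hK, abs_neg, abs_mul, abs_of_pos h8]
    calc (8:ℝ)^m * |E| < 8^m * (1/8)^m := mul_lt_mul_of_pos_left hE h8
      _ = 1 := by rw [← mul_pow]; norm_num
  have h2 : (K:ℝ) ≠ 0 := by
    rw [hK]
    simp only [neg_ne_zero]
    exact mul_ne_zero (ne_of_gt h8) hE0
  have h3 : |K| < 1 := by exact_mod_cast h1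
  have h4 : K ≠ 0 := by exact_mod_cast h2
  have h5 := abs_lt.mp h3
  omega

lemma head_K (p q s : ℤ) (J₁ J₂ m : ℕ) (h1 : ∀ i, i < J₁ → M (2*i) ≤ m)
    (h2 : ∀ i, i < J₂ → M (2*i+1) ≤ m) :
    ∃ K : ℤ, (K:ℝ) = ((p:ℝ) + q * (∑ i ∈ Finset.range J₁, w (2*i)) +
      s * (∑ i ∈ Finset.range J₂, w (2*i+1))) * 8^m := by
  have e1 : ∀ (J:ℕ) (g : ℕ → ℕ), (∀ i, i < J → g i ≤ m) →
      ((∑ i ∈ Finset.range J, (8:ℤ)^(m - g i) : ℤ):ℝ) =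
        (∑ i ∈ Finset.range J, (1/8:ℝ)^(g i)) * 8^m := by
    intro J g hg
    push_cast
    rw [Finset.sum_mul]
    apply Finset.sum_congr rfl
    intro i hi
    rw [pow_sub_eq (hg i (Finset.mem_range.mp hi))]
  refine ⟨p * 8^m + q * (∑ i ∈ Finset.range J₁, 8^(m - M (2*i))) +
    s * (∑ i ∈ Finset.range J₂, 8^(m - M (2*i+1))), ?_⟩
  have e2 := e1 J₁ (fun i => M (2*i)) h1
  have e3 := e1 J₂ (fun i => M (2*i+1)) h2
  push_cast at e2 e3 ⊢
  unfold w
  rw [add_mul, add_mul, mul_assoc, mul_assoc, ← e2, ← e3]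

set_option maxHeartbeats 1000000 in
lemma lin_indep (p q s : ℤ) (h : (p:ℝ) + q * th 0 + s * th 1 = 0) :
    p = 0 ∧ q = 0 ∧ s = 0 := by
  have main : q = 0 ∧ s = 0 := by
    by_contra hqs
    set Q : ℕ := q.natAbs + s.natAbs with hQdef
    have hQ1 : 1 ≤ Q := by omega
    have habsq : |(q:ℝ)| ≤ (Q:ℝ) := by
      rw [← Int.cast_abs]
      have : |q| ≤ (Q:ℤ) := by rw [Int.abs_eq_natAbs]; omega
      exact_mod_cast this
    have habss : |(s:ℝ)| ≤ (Q:ℝ) := by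
      rw [← Int.cast_abs]
      have : |s| ≤ (Q:ℤ) := by rw [Int.abs_eq_natAbs]; omega
      exact_mod_cast this
    have habsqs : |(q:ℝ)| + |(s:ℝ)| = (Q:ℝ) := by
      rw [← Int.cast_abs, ← Int.cast_abs]
      have : |q| + |s| = (Q:ℤ) := by rw [Int.abs_eq_natAbs, Int.abs_eq_natAbs]; omega
      exact_mod_cast this
    rcases eq_or_ne q 0 with hq0 | hq0
    · -- odd case : leading coefficient s at index 2Q+1
      have hs0 : s ≠ 0 := by tauto
      have hs1 : (1:ℝ) ≤ |(s:ℝ)| := by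
        rw [← Int.cast_abs]
        have : (1:ℤ) ≤ |s| := by rw [Int.abs_eq_natAbs]; omega
        exact_mod_cast this
      obtain ⟨K, hK⟩ := head_K p q s (Q+1) Q (M (2*Q))
        (fun i hi => M_strictMono.monotone (by omega))
        (fun i hi => M_strictMono.monotone (by omega))
      set E := (q:ℝ) * T 0 (Q+1) + (s:ℝ) * T 1 Q with hE
      have hAE : (((p:ℝ) + q * (∑ i ∈ Finset.range (Q+1), w (2*i)) +
          s * (∑ i ∈ Finset.range Q, w (2*i+1))) + E) = 0 := by
        have hs0' := th_split 0 (Q+1)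
        have hs1' := th_split 1 Q
        simp only [Nat.add_zero] at hs0'
        rw [← h, hs0', hs1', hE]
        ring
      have heq : (K:ℝ) + 8^(M (2*Q)) * E = 0 := by
        rw [hK]; linear_combination (8:ℝ)^(M (2*Q)) * hAE
      -- upper bound
      have hT0le : T 0 (Q+1) ≤ 2 * w (2*(Q+1)) := by simpa using T_le 0 (Q+1)
      have hT1le : T 1 Q ≤ 2 * w (2*Q+1) := T_le 1 Q
      have hw1 : w (2*(Q+1)) ≤ w (2*Q+1) := w_antitone (by omega)
      have hub : |E| < (1/8:ℝ)^(M (2*Q)) := by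
        have h1 : |E| ≤ |(q:ℝ)| * T 0 (Q+1) + |(s:ℝ)| * T 1 Q := by
          calc |E| ≤ |(q:ℝ) * T 0 (Q+1)| + |(s:ℝ) * T 1 Q| := abs_add_le _ _
            _ = |(q:ℝ)| * T 0 (Q+1) + |(s:ℝ)| * T 1 Q := by
                rw [abs_mul, abs_mul, abs_of_pos (T_pos _ _), abs_of_pos (T_pos _ _)]
        have h2 : |(q:ℝ)| * T 0 (Q+1) + |(s:ℝ)| * T 1 Q ≤ (2*Q:ℝ) * w (2*Q+1) := by
          have a1 := abs_nonneg (q:ℝ)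
          have a2 := abs_nonneg (s:ℝ)
          have t1 := (T_pos 0 (Q+1)).le
          have t2 := (T_pos 1 Q).le
          nlinarith [w_pos (2*Q+1), w_pos (2*(Q+1))]
        have h3 : (2*Q:ℝ) * w (2*Q+1) < w (2*Q) := by
          exact coefBound Q (2*Q) (2*Q+1) (by omega) (gap2Q Q (2*Q) (by omega))
        have h4 : w (2*Q) = (1/8:ℝ)^(M (2*Q)) := rfl
        linarith
      -- lower bound
      have hE0 : E ≠ 0 := by
        rw [← abs_pos]
        set R := (q:ℝ) * T 0 (Q+1) + (s:ℝ) * T 1 (Q+1) with hR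
        have hER : E = (s:ℝ) * w (2*Q+1) + R := by
          rw [hE, hR, T_peel 1 Q]; ring
        have h5 : |R| ≤ (2*Q:ℝ) * w (2*Q+2) := by
          have hT0le' : T 0 (Q+1) ≤ 2 * w (2*(Q+1)) := by simpa using T_le 0 (Q+1)
          have hT1le' : T 1 (Q+1) ≤ 2 * w (2*(Q+1)+1) := T_le 1 (Q+1)
          have hw2 : w (2*(Q+1)) ≤ w (2*Q+2) := w_antitone (by omega)
          have hw3 : w (2*(Q+1)+1) ≤ w (2*Q+2) := w_antitone (by omega)
          have h6 : |R| ≤ |(q:ℝ)| * T 0 (Q+1) + |(s:ℝ)| * T 1 (Q+1) := by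
            calc |R| ≤ |(q:ℝ) * T 0 (Q+1)| + |(s:ℝ) * T 1 (Q+1)| := abs_add_le _ _
              _ = _ := by
                rw [abs_mul, abs_mul, abs_of_pos (T_pos _ _), abs_of_pos (T_pos _ _)]
          have a1 := abs_nonneg (q:ℝ)
          have a2 := abs_nonneg (s:ℝ)
          have t1 := (T_pos 0 (Q+1)).le
          have t2 := (T_pos 1 (Q+1)).le
          nlinarith [w_pos (2*Q+2)]
        have h7 : (2*Q:ℝ) * w (2*Q+2) < w (2*Q+1) := by
          have g := gap2Q Q (2*Q+1) (by omega)
          have g2 : 2*Q+1+1 = 2*Q+2 := by omega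
          rw [g2] at g
          exact coefBound Q (2*Q+1) (2*Q+2) (by omega) g
        have h8 : |(s:ℝ)| * w (2*Q+1) ≤ |E| + |R| := by
          calc |(s:ℝ)| * w (2*Q+1) = |(s:ℝ) * w (2*Q+1)| := by
                rw [abs_mul, abs_of_pos (w_pos _)]
            _ = |E - R| := by rw [hER]; ring_nf
            _ ≤ |E| + |R| := abs_sub _ _
        nlinarith [w_pos (2*Q+1)]
      exact absorb (M (2*Q)) K E hE0 hub heq
    · -- even case : leading coefficient q at index 2Q
      have hq1 : (1:ℝ) ≤ |(q:ℝ)| := by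
        rw [← Int.cast_abs]
        have : (1:ℤ) ≤ |q| := by rw [Int.abs_eq_natAbs]; omega
        exact_mod_cast this
      have hQm1 : 2*Q - 1 + 1 = 2*Q := by omega
      obtain ⟨K, hK⟩ := head_K p q s Q Q (M (2*Q-1))
        (fun i hi => M_strictMono.monotone (by omega))
        (fun i hi => M_strictMono.monotone (by omega))
      set E := (q:ℝ) * T 0 Q + (s:ℝ) * T 1 Q with hE
      have hAE : (((p:ℝ) + q * (∑ i ∈ Finset.range Q, w (2*i)) +
          s * (∑ i ∈ Finset.range Q, w (2*i+1))) + E) = 0 := by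
        have hs0' := th_split 0 Q
        have hs1' := th_split 1 Q
        simp only [Nat.add_zero] at hs0'
        rw [← h, hs0', hs1', hE]
        ring
      have heq : (K:ℝ) + 8^(M (2*Q-1)) * E = 0 := by
        rw [hK]; linear_combination (8:ℝ)^(M (2*Q-1)) * hAE
      have hT0le : T 0 Q ≤ 2 * w (2*Q) := by simpa using T_le 0 Q
      have hT1le : T 1 Q ≤ 2 * w (2*Q+1) := T_le 1 Q
      have hw1 : w (2*Q+1) ≤ w (2*Q) := w_antitone (by omega)
      have hub : |E| < (1/8:ℝ)^(M (2*Q-1)) := by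
        have h1 : |E| ≤ |(q:ℝ)| * T 0 Q + |(s:ℝ)| * T 1 Q := by
          calc |E| ≤ |(q:ℝ) * T 0 Q| + |(s:ℝ) * T 1 Q| := abs_add_le _ _
            _ = _ := by
              rw [abs_mul, abs_mul, abs_of_pos (T_pos _ _), abs_of_pos (T_pos _ _)]
        have h2 : |(q:ℝ)| * T 0 Q + |(s:ℝ)| * T 1 Q ≤ (2*Q:ℝ) * w (2*Q) := by
          have a1 := abs_nonneg (q:ℝ)
          have a2 := abs_nonneg (s:ℝ)
          have t1 := (T_pos 0 Q).le
          have t2 := (T_pos 1 Q).le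
          nlinarith [w_pos (2*Q), w_pos (2*Q+1)]
        have h3 : (2*Q:ℝ) * w (2*Q) < w (2*Q-1) := by
          have g := gap2Q Q (2*Q-1) (by omega)
          rw [hQm1] at g
          exact coefBound Q (2*Q-1) (2*Q) (by omega) g
        have h4 : w (2*Q-1) = (1/8:ℝ)^(M (2*Q-1)) := rfl
        linarith
      have hE0 : E ≠ 0 := by
        rw [← abs_pos]
        set R := (q:ℝ) * T 0 (Q+1) + (s:ℝ) * T 1 Q with hR
        have hER : E = (q:ℝ) * w (2*Q) + R := by
          have hp := T_peel 0 Q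
          simp only [Nat.add_zero] at hp
          rw [hE, hR, hp]; ring
        have h5 : |R| ≤ (2*Q:ℝ) * w (2*Q+1) := by
          have hT0le' : T 0 (Q+1) ≤ 2 * w (2*(Q+1)) := by simpa using T_le 0 (Q+1)
          have hw2 : w (2*(Q+1)) ≤ w (2*Q+1) := w_antitone (by omega)
          have h6 : |R| ≤ |(q:ℝ)| * T 0 (Q+1) + |(s:ℝ)| * T 1 Q := by
            calc |R| ≤ |(q:ℝ) * T 0 (Q+1)| + |(s:ℝ) * T 1 Q| := abs_add_le _ _
              _ = _ := by
                rw [abs_mul, abs_mul, abs_of_pos (T_pos _ _), abs_of_pos (T_pos _ _)]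
          have a1 := abs_nonneg (q:ℝ)
          have a2 := abs_nonneg (s:ℝ)
          have t1 := (T_pos 0 (Q+1)).le
          have t2 := (T_pos 1 Q).le
          nlinarith [w_pos (2*Q+1)]
        have h7 : (2*Q:ℝ) * w (2*Q+1) < w (2*Q) := by
          exact coefBound Q (2*Q) (2*Q+1) (by omega) (gap2Q Q (2*Q) (by omega))
        have h8 : |(q:ℝ)| * w (2*Q) ≤ |E| + |R| := by
          calc |(q:ℝ)| * w (2*Q) = |(q:ℝ) * w (2*Q)| := by
                rw [abs_mul, abs_of_pos (w_pos _)]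
            _ = |E - R| := by rw [hER]; ring_nf
            _ ≤ |E| + |R| := abs_sub _ _
        nlinarith [w_pos (2*Q)]
      exact absorb (M (2*Q-1)) K E hE0 hub heq
  refine ⟨?_, main.1, main.2⟩
  have hp : (p:ℝ) = 0 := by
    rw [main.1, main.2] at h
    push_cast at h
    linarith
  exact_mod_cast hp

end Stmt9
namespace Stmt9

lemma Pd_inj : ∀ (α β : List (Fin 4)), α.length = β.length →
    Pd 0 α = Pd 0 β → Pd 1 α = Pd 1 β → Pd 2 α = Pd 2 β → α = β := by
  intro α
  induction α with
  | nil =>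
    intro β hlen _ _ _
    cases β with
    | nil => rfl
    | cons b β' => simp at hlen
  | cons a α' ih =>
    intro β hlen h0 h1 h2
    cases β with
    | nil => simp at hlen
    | cons b β' =>
      have hlen' : α'.length = β'.length := by simpa using hlen
      simp only [Pd, hlen'] at h0 h1 h2
      have hX : (1:ℤ) ≤ 8 ^ β'.length := one_le_pow₀ (by norm_num)
      have b0a := Pd_nonneg 0 α'; have b0b := Pd_nonneg 0 β'
      have b1a := Pd_nonneg 1 α'; have b1b := Pd_nonneg 1 β'
      have b2a := Pd_nonneg 2 α'; have b2b := Pd_nonneg 2 β'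
      have c0a := Pd_le 0 α'; have c0b := Pd_le 0 β'
      have c1a := Pd_le 1 α'; have c1b := Pd_le 1 β'
      have c2a := Pd_le 2 α'; have c2b := Pd_le 2 β'
      rw [hlen'] at c0a c1a c2a
      have hab : a = b := by
        generalize hXX : (8:ℤ) ^ β'.length = X at *
        fin_cases a <;> fin_cases b <;>
          simp_all [dd] <;> omega
      subst hab
      have e0 : Pd 0 α' = Pd 0 β' := by omega
      have e1 : Pd 1 α' = Pd 1 β' := by omega
      have e2 : Pd 2 α' = Pd 2 β' := by omega
      rw [ih β' hlen' e0 e1 e2]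

lemma V_inj (α β : List (Fin 4)) (hlen : α.length = β.length) (hV : V α = V β) :
    α = β := by
  have h1 := V_rel α
  have h2 := V_rel β
  rw [hlen, hV, h2] at h1
  -- 8 * (A...) = 8 * (B...)
  have h3 : ((Pd 0 α - Pd 0 β : ℤ):ℝ) + ((Pd 1 α - Pd 1 β : ℤ):ℝ) * th 0 +
      ((Pd 2 α - Pd 2 β : ℤ):ℝ) * th 1 = 0 := by
    push_cast
    linarith
  obtain ⟨e0, e1, e2⟩ := lin_indep _ _ _ h3
  exact Pd_inj α β hlen (by omega) (by omega) (by omega)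

end Stmt9
namespace Stmt9

lemma V_append (l₁ l₂ : List (Fin 4)) :
    V (l₁ ++ l₂) = V l₁ + (1/8:ℝ)^l₁.length * V l₂ := by
  induction l₁ with
  | nil => simp [V_nil]
  | cons a l ih =>
    simp only [List.cons_append, V_cons, ih, List.length_cons, pow_succ]
    ring

lemma V_replicate (m : ℕ) : V (List.replicate m 0) = 0 := by
  induction m with
  | zero => simp [V_nil]
  | succ m ih =>
    rw [List.replicate_succ, V_cons, ih]
    simp [cc]

lemma V_ofFn : ∀ (m : ℕ) (f : Fin m → Fin 4),
    V (List.ofFn f) = ∑ j : Fin m, cc (f j) * (1/8:ℝ)^(j:ℕ) := by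
  intro m
  induction m with
  | zero => intro f; simp [V_nil]
  | succ m ih =>
    intro f
    rw [List.ofFn_succ, V_cons, ih, Fin.sum_univ_succ]
    simp only [Fin.val_zero, pow_zero, mul_one, Finset.mul_sum]
    congr 1
    apply Finset.sum_congr rfl
    intro j _
    rw [Fin.val_succ, pow_succ]
    ring

lemma delta_pair (n : ℕ) (hn : 3 ≤ n) :
    ∃ α β : List (Fin 4), α.length = n ∧ β.length = n ∧ α ≠ β ∧
      ratioIFS rr α = ratioIFS rr β ∧ 0 < |V α - V β| ∧
      |V α - V β| ≤ (1/8:ℝ)^(n^2 - 1) := by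
  -- find the window index K with M K < n ≤ M (K+1)
  have hex : ∃ k, n ≤ M k := ⟨n, by have := M_ge n; omega⟩
  set k' := Nat.find hex with hk'
  have hk'le : n ≤ M k' := Nat.find_spec hex
  have hk'pos : 1 ≤ k' := by
    rcases Nat.eq_zero_or_pos k' with h | h
    · exfalso
      have : n ≤ M 0 := h ▸ hk'le
      have : M 0 = 2 := by norm_num [M]
      omega
    · exact h
  set K := k' - 1 with hK
  have hKlt : M K < n := by
    have := Nat.find_min hex (m := K) (by omega)
    omega
  have hKge : n ≤ M (K + 1) := by
    have : K + 1 = k' := by omega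
    rw [this]; exact hk'le
  set ε := K % 2 with hεdef
  set I := K / 2 with hIdef
  have hKeq : 2 * I + ε = K := by omega
  set a := n - M K - 1 with ha
  have han : n = a + M K + 1 := by omega
  have hεlt : ε = 0 ∨ ε = 1 := by omega
  set sym : Fin 4 := if ε = 0 then 2 else 3 with hsym
  have hccsym : cc sym = th ε := by
    rcases hεlt with h | h <;> simp [hsym, h, cc]
  -- the first word
  set α : List (Fin 4) := List.replicate a 0 ++ sym :: List.replicate (M K) 0 with hα
  have hαlen : α.length = n := by
    simp only [hα, List.length_append, List.length_replicate, List.length_cons]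
    omega
  have hVα : V α = (1/8:ℝ)^a * th ε := by
    rw [hα, V_append, V_replicate, V_cons, V_replicate, hccsym]
    simp
  -- the second word
  set g : ℕ → ℕ := fun i => a + M (2*i + ε) with hg
  set S : Finset ℕ := (Finset.range (I+1)).image g with hS
  set β : List (Fin 4) := List.ofFn (fun j : Fin n => if (j:ℕ) ∈ S then 1 else 0) with hβ
  have hβlen : β.length = n := by simp [hβ]
  have hgmono : StrictMono g := by
    intro x y hxy
    have := M_strictMono (show 2*x + ε < 2*y + ε by omega)
    simp only [hg]
    omega
  have hSsub : S ⊆ Finset.range n := by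
    intro j hj
    simp only [hS, Finset.mem_image, Finset.mem_range] at hj
    obtain ⟨i, hi, rfl⟩ := hj
    have h1 : 2*i + ε ≤ K := by omega
    have h2 : M (2*i + ε) ≤ M K := M_strictMono.monotone h1
    simp only [hg, Finset.mem_range]
    omega
  have hVβ : V β = (1/8:ℝ)^a * ∑ i ∈ Finset.range (I+1), w (2*i + ε) := by
    rw [hβ, V_ofFn]
    have e1 : ∀ j : Fin n, cc (if (j:ℕ) ∈ S then 1 else 0) * (1/8:ℝ)^(j:ℕ) =
        (if (j:ℕ) ∈ S then (1/8:ℝ)^(j:ℕ) else 0) := by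
      intro j
      split <;> simp [cc]
    rw [Finset.sum_congr rfl (fun j _ => e1 j)]
    rw [Fin.sum_univ_eq_sum_range (fun j => if j ∈ S then (1/8:ℝ)^j else 0) n]
    rw [Finset.sum_ite_mem, Finset.inter_eq_right.mpr hSsub, hS]
    rw [Finset.sum_image (fun x _ y _ hxy => hgmono.injective hxy)]
    rw [Finset.mul_sum]
    apply Finset.sum_congr rfl
    intro i _
    simp only [hg, w, pow_add]
  -- the difference
  have hdiff : V α - V β = (1/8:ℝ)^a * T ε (I+1) := by
    rw [hVα, hVβ, ← mul_sub]
    congr 1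
    have := th_split ε (I+1)
    linarith
  have h8a : (0:ℝ) < (1/8:ℝ)^a := by positivity
  have hpos : 0 < V α - V β := by
    rw [hdiff]
    exact mul_pos h8a (T_pos ε (I+1))
  -- upper bound
  have hKI : 2*(I+1) + ε = K + 2 := by omega
  have hTle : T ε (I+1) ≤ 2 * (1/8:ℝ)^(M (K+2)) := by
    have := T_le ε (I+1)
    rw [hKI] at this
    exact this
  have hM2 : n^2 ≤ M (K+2) := by
    rw [M_succ]
    exact Nat.pow_le_pow_left hKge 2
  have hub : V α - V β ≤ (1/8:ℝ)^(n^2 - 1) := by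
    rw [hdiff]
    have h1 : (1/8:ℝ)^a * T ε (I+1) ≤ 1 * (2 * (1/8:ℝ)^(M (K+2))) := by
      apply mul_le_mul _ hTle (T_pos ε (I+1)).le (by norm_num)
      exact pow_le_one₀ (by norm_num) (by norm_num)
    have h2 : (1/8:ℝ)^(M (K+2)) ≤ (1/8:ℝ)^(n^2) :=
      pow_le_pow_of_le_one (by norm_num) (by norm_num) hM2
    have h3 : (1/8:ℝ)^(n^2) = (1/8:ℝ)^(n^2-1) * (1/8) := by
      rw [← pow_succ]
      congr 1
      have : 1 ≤ n^2 := by nlinarith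
      omega
    have h4 : (0:ℝ) < (1/8:ℝ)^(n^2-1) := by positivity
    calc (1/8:ℝ)^a * T ε (I+1) ≤ 2 * (1/8:ℝ)^(M (K+2)) := by linarith
      _ ≤ 2 * (1/8:ℝ)^(n^2) := by linarith
      _ = 2 * (1/8) * (1/8:ℝ)^(n^2-1) := by rw [h3]; ring
      _ ≤ (1/8:ℝ)^(n^2-1) := by linarith
  have hne : α ≠ β := by
    intro hcontra
    rw [hcontra] at hpos
    simp at hpos
  refine ⟨α, β, hαlen, hβlen, hne, ?_, ?_, ?_⟩
  · rw [ratio_const, ratio_const, hαlen, hβlen]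
  · rw [abs_of_pos hpos]; exact hpos
  · rw [abs_of_pos hpos]; exact hub

end Stmt9
namespace Stmt9

lemma log8_ge : (2:ℝ) ≤ Real.log 8 := by
  have h : (8:ℝ) = 2^3 := by norm_num
  rw [h, Real.log_pow]
  push_cast
  nlinarith [Real.log_two_gt_d9]

lemma delta_log_bound (n : ℕ) (hn : 3 ≤ n) :
    Real.log (DeltaIFS rr cc n) / n ≤ -2 * ((n:ℝ) - 1) := by
  obtain ⟨α, β, h1, h2, h3, h4, h5, h6⟩ := delta_pair n hn
  set Sset := {x : ℝ | ∃ α β : List (Fin 4), α.length = n ∧ β.length = n ∧ α ≠ β ∧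
    ratioIFS rr α = ratioIFS rr β ∧ x = |compIFS rr cc α 0 - compIFS rr cc β 0|} with hSset
  have hmem : |V α - V β| ∈ Sset := ⟨α, β, h1, h2, h3, h4, rfl⟩
  have hfin : Sset.Finite := by
    have hsub : Sset ⊆ (fun p : List (Fin 4) × List (Fin 4) =>
        |compIFS rr cc p.1 0 - compIFS rr cc p.2 0|) ''
        ({l : List (Fin 4) | l.length = n} ×ˢ {l : List (Fin 4) | l.length = n}) := by
      rintro x ⟨γ, δ, hg1, hg2, _, _, rfl⟩
      exact ⟨(γ, δ), ⟨hg1, hg2⟩, rfl⟩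
    exact Set.Finite.subset (Set.Finite.image _
      ((List.finite_length_eq _ n).prod (List.finite_length_eq _ n))) hsub
  have hSne : Sset.Nonempty := ⟨_, hmem⟩
  have hbdd : BddBelow Sset := by
    refine ⟨0, ?_⟩
    rintro x ⟨γ, δ, _, _, _, _, rfl⟩
    exact abs_nonneg _
  have hΔdef : DeltaIFS rr cc n = sInf Sset := rfl
  have hΔmem : sInf Sset ∈ Sset := hSne.csInf_mem hfin
  have hΔpos : 0 < sInf Sset := by
    obtain ⟨γ, δ, hg1, hg2, hg3, _, hg5⟩ := hΔmem
    rw [hg5]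
    rw [abs_pos, sub_ne_zero]
    intro hVeq
    exact hg3 (V_inj γ δ (hg1.trans hg2.symm) hVeq)
  have hΔle : sInf Sset ≤ (1/8:ℝ)^(n^2 - 1) := le_trans (csInf_le hbdd hmem) h6
  have hlog : Real.log (sInf Sset) ≤ -(((n:ℝ)^2 - 1) * Real.log 8) := by
    calc Real.log (sInf Sset) ≤ Real.log ((1/8:ℝ)^(n^2 - 1)) :=
          Real.log_le_log hΔpos hΔle
      _ = ((n^2 - 1 : ℕ):ℝ) * Real.log (1/8) := by rw [Real.log_pow]
      _ = -(((n:ℝ)^2 - 1) * Real.log 8) := by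
          rw [one_div, Real.log_inv]
          rw [Nat.cast_sub (by nlinarith : 1 ≤ n^2)]
          push_cast
          ring
  have hn0 : (0:ℝ) < n := by positivity
  have hn3 : (3:ℝ) ≤ n := by exact_mod_cast hn
  rw [hΔdef, div_le_iff₀ hn0]
  have hL := log8_ge
  have hsq : (0:ℝ) ≤ (n:ℝ)^2 - 1 := by nlinarith
  have key : (2:ℝ) * ((n:ℝ)^2 - 1) ≤ ((n:ℝ)^2 - 1) * Real.log 8 := by nlinarith
  nlinarith [hlog, key]

end Stmt9

theorem stmt9 : ∃ (k : ℕ) (r c : Fin k → ℝ),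
    (∀ i, 0 < |r i| ∧ |r i| < 1) ∧
    (∀ n : ℕ, ∀ α β : List (Fin k), α.length = n → β.length = n → α ≠ β →
      compIFS r c α ≠ compIFS r c β) ∧
    Filter.Tendsto (fun n : ℕ => Real.log (DeltaIFS r c n) / n)
      Filter.atTop Filter.atBot := by
  refine ⟨4, Stmt9.rr, Stmt9.cc, ?_, ?_, ?_⟩
  · intro i
    rw [show Stmt9.rr i = (1/8:ℝ) from rfl, abs_of_pos (by norm_num : (0:ℝ) < 1/8)]
    norm_num
  · intro n α β ha hb hne hcomp
    exact hne (Stmt9.V_inj α β (ha.trans hb.symm)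
      (by unfold Stmt9.V; rw [hcomp]))
  · apply Filter.tendsto_atBot_mono' Filter.atTop
      (f₁ := fun n : ℕ => -2 * ((n:ℝ) - 1))
    · filter_upwards [Filter.eventually_ge_atTop 3] with n hn
      exact Stmt9.delta_log_bound n hn
    · have h1 : Filter.Tendsto (fun n : ℕ => ((n:ℝ) - 1)) Filter.atTop Filter.atTop :=
        Filter.tendsto_atTop_add_const_right _ _ tendsto_natCast_atTop_atTop
      have h2 : Filter.Tendsto (fun n : ℕ => 2 * ((n:ℝ) - 1)) Filter.atTop Filter.atTop :=
        h1.const_mul_atTop (by norm_num)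
      have h3 : Filter.Tendsto (fun n : ℕ => -(2 * ((n:ℝ) - 1)))
          Filter.atTop Filter.atBot := Filter.tendsto_neg_atTop_atBot.comp h2
      simpa [neg_mul] using h3
end

section
/- Let (ζₘ) be a sequence of positive integers with ζ₁ = 1 and, for each m ≥ 2, ζₘ ≥ 8^{Lₘ₋₁} where Lₘ₋₁ is defined by 2^{Lₘ₋₁−1} − 1 ≤ qₘ₋₁ < 2^{Lₘ₋₁} − 1 and qₘ is the continued fraction denominator recurrence qₘ = ζₘ qₘ₋₁ + qₘ₋₂ (q₀ = 1, q₋₁ = 0). Then for all m ≥ 2, defining L'ₘ by 2^{L'ₘ−1} − 1 ≤ qₘ < 2^{L'ₘ} − 1, one has 2Lₘ₋₁ < L'ₘ. -/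
theorem stmt14 (ζ q L : ℕ → ℕ)
    (hζ1 : ζ 1 = 1) (hζpos : ∀ m, 1 ≤ m → 0 < ζ m)
    (hq0 : q 0 = 1) (hq1 : q 1 = ζ 1)
    (hrec : ∀ m, 2 ≤ m → q m = ζ m * q (m - 1) + q (m - 2))
    (hL : ∀ m, 1 ≤ m → 2 ^ (L m - 1) - 1 ≤ q m ∧ q m < 2 ^ (L m) - 1)
    (hζbig : ∀ m, 2 ≤ m → 8 ^ (L (m - 1)) ≤ ζ m) :
    ∀ m, 2 ≤ m → 2 * L (m - 1) < L m := by
  have hqpos : ∀ m, 0 < q m := by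
    intro m
    induction m using Nat.strong_induction_on with
    | _ m ih =>
      match m with
      | 0 => simp [hq0]
      | 1 => simp [hq1, hζ1]
      | (k+2) =>
        have hk : 0 < q k := ih k (by omega)
        have := hrec (k+2) (by omega)
        simp only [show k+2-2 = k by omega] at this
        rw [this]
        exact Nat.lt_of_lt_of_le hk (Nat.le_add_left _ _)
  intro m hm
  have h1 : 2 ^ (2 * L (m-1)) ≤ q m := by
    have hζ : 8 ^ (L (m-1)) ≤ ζ m := hζbig m hm
    have hq : 1 ≤ q (m-1) := hqpos (m-1)
    have : 8 ^ (L (m-1)) * 1 ≤ ζ m * q (m-1) := Nat.mul_le_mul hζ hq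
    have h8 : (2:ℕ) ^ (2 * L (m-1)) ≤ 8 ^ (L (m-1)) := by
      have : (8:ℕ) ^ (L (m-1)) = 2 ^ (3 * L (m-1)) := by
        rw [pow_mul]; norm_num
      rw [this]
      exact Nat.pow_le_pow_right (by norm_num) (by omega)
    calc 2 ^ (2 * L (m-1)) ≤ 8 ^ (L (m-1)) * 1 := by simpa using h8
      _ ≤ ζ m * q (m-1) := this
      _ ≤ q m := by rw [hrec m hm]; exact Nat.le_add_right _ _
  have h2 : q m < 2 ^ (L m) - 1 := (hL m (by omega)).2
  have h3 : 2 ^ (2 * L (m-1)) < 2 ^ (L m) := by omega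
  exact (Nat.pow_lt_pow_iff_right (by norm_num)).mp h3
end

section
/- For every sequence (εₙ) of positive reals with εₙ ≤ 8^{−n} for all n, there exist Liouville numbers s, t ∈ (0,1) such that 1, s, t are not related by any equation t = (a/b)s + c/d with integers a,b,d ≠ 0, and for every n ≥ 1, min{(1/2ⁿ)|q·s − p| : 0 ≤ p,q ≤ 2ⁿ−1, (p,q) ≠ (0,0)} ≤ εₙ or min{(1/2ⁿ)|q·t − p| : 0 ≤ p,q ≤ 2ⁿ−1, (p,q) ≠ (0,0)} ≤ εₙ. -/
namespace S18

variable {f : ℕ → ℕ}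

lemma mono_add (hf : ∀ k, f k + 1 ≤ f (k+1)) (k j : ℕ) : f k + j ≤ f (k + j) := by
  induction j with
  | zero => simp
  | succ j ih =>
    have h1 := hf (k + j)
    have e : k + (j + 1) = (k + j) + 1 := by omega
    rw [e]; omega

lemma mono_le (hf : ∀ k, f k + 1 ≤ f (k+1)) {k l : ℕ} (h : k ≤ l) : f k ≤ f l := by
  have := mono_add hf k (l - k)
  have e : k + (l - k) = l := by omega
  rw [e] at this; omega

noncomputable def X (f : ℕ → ℕ) : ℝ := ∑' j, ((2:ℝ)⁻¹) ^ f (j+1)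
noncomputable def T (f : ℕ → ℕ) (k : ℕ) : ℝ := ∑' j, ((2:ℝ)⁻¹) ^ f (j+k+1)
noncomputable def S (f : ℕ → ℕ) (k : ℕ) : ℝ := ∑ j ∈ Finset.range k, ((2:ℝ)⁻¹) ^ f (j+1)

lemma term_le (hf : ∀ k, f k + 1 ≤ f (k+1)) (k j : ℕ) :
    ((2:ℝ)⁻¹) ^ f (j+k+1) ≤ ((2:ℝ)⁻¹) ^ f (k+1) * ((2:ℝ)⁻¹) ^ j := by
  have h1 : f (k+1) + j ≤ f (j + k + 1) := by
    have := mono_add hf (k+1) j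
    have e : k + 1 + j = j + k + 1 := by omega
    rwa [e] at this
  calc ((2:ℝ)⁻¹) ^ f (j+k+1) ≤ ((2:ℝ)⁻¹) ^ (f (k+1) + j) :=
        pow_le_pow_of_le_one (by norm_num) (by norm_num) h1
    _ = _ := by rw [pow_add]

lemma summable_T (hf : ∀ k, f k + 1 ≤ f (k+1)) (k : ℕ) :
    Summable (fun j => ((2:ℝ)⁻¹) ^ f (j+k+1)) := by
  apply Summable.of_nonneg_of_le (fun j => by positivity) (term_le hf k)
    ((summable_geometric_of_lt_one (by norm_num) (by norm_num : (2:ℝ)⁻¹ < 1)).mul_left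
      (((2:ℝ)⁻¹) ^ f (k+1)))

lemma T_pos (hf : ∀ k, f k + 1 ≤ f (k+1)) (k : ℕ) : 0 < T f k := by
  have h := Summable.le_tsum (summable_T hf k) 0 (fun j _ => by positivity)
  calc (0:ℝ) < ((2:ℝ)⁻¹) ^ f (0+k+1) := by positivity
    _ ≤ T f k := h

lemma T_ge (hf : ∀ k, f k + 1 ≤ f (k+1)) (k : ℕ) : ((2:ℝ)⁻¹) ^ f (k+1) ≤ T f k := by
  have h := Summable.le_tsum (summable_T hf k) 0 (fun j _ => by positivity)
  have e : (0:ℕ) + k + 1 = k + 1 := by omega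
  rw [e] at h
  exact h

lemma T_le (hf : ∀ k, f k + 1 ≤ f (k+1)) (k : ℕ) : T f k ≤ 2 * ((2:ℝ)⁻¹) ^ f (k+1) := by
  have h := Summable.tsum_le_tsum (f := fun j => ((2:ℝ)⁻¹) ^ f (j+k+1))
    (g := fun j => ((2:ℝ)⁻¹) ^ f (k+1) * ((2:ℝ)⁻¹) ^ j) (term_le hf k) (summable_T hf k)
    ((summable_geometric_of_lt_one (by norm_num) (by norm_num : (2:ℝ)⁻¹ < 1)).mul_left _)
  refine h.trans ?_
  rw [tsum_mul_left, tsum_geometric_of_lt_one (by norm_num) (by norm_num : (2:ℝ)⁻¹ < 1)]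
  rw [show ((1:ℝ) - 2⁻¹)⁻¹ = 2 by norm_num]
  ring_nf; exact le_rfl

lemma X_eq (hf : ∀ k, f k + 1 ≤ f (k+1)) (k : ℕ) : X f = S f k + T f k :=
  (Summable.sum_add_tsum_nat_add (f := fun j => ((2:ℝ)⁻¹) ^ f (j+1)) k (summable_T hf 0)).symm

lemma S_nonneg (f : ℕ → ℕ) (k : ℕ) : 0 ≤ S f k :=
  Finset.sum_nonneg fun j _ => by positivity

lemma X_pos (hf : ∀ k, f k + 1 ≤ f (k+1)) : 0 < X f := by
  rw [X_eq hf 0]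
  simpa [S] using (T_pos hf 0)

lemma X_lt_one (hf : ∀ k, f k + 1 ≤ f (k+1)) (hf1 : 2 ≤ f 1) : X f < 1 := by
  rw [X_eq hf 0]
  have h1 : T f 0 ≤ 2 * ((2:ℝ)⁻¹) ^ f 1 := T_le hf 0
  have h2 : ((2:ℝ)⁻¹) ^ f 1 ≤ ((2:ℝ)⁻¹) ^ 2 :=
    pow_le_pow_of_le_one (by norm_num) (by norm_num) hf1
  have h3 : S f 0 = 0 := by simp [S]
  rw [h3, zero_add]
  nlinarith

lemma S_lt_one (hf : ∀ k, f k + 1 ≤ f (k+1)) (hf1 : 2 ≤ f 1) (k : ℕ) : S f k < 1 := by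
  have h := X_eq hf k
  have := T_pos hf k
  have := X_lt_one hf hf1
  linarith

noncomputable def P (f : ℕ → ℕ) (k m : ℕ) : ℕ := ∑ j ∈ Finset.range k, 2^(m - f (j+1))

lemma P_eq (k m : ℕ) (hm : ∀ j, j < k → f (j+1) ≤ m) :
    ((P f k m : ℕ) : ℝ) = 2^m * S f k := by
  rw [P, S, Finset.mul_sum]
  push_cast
  apply Finset.sum_congr rfl
  intro j hj
  have hle : f (j+1) ≤ m := hm j (Finset.mem_range.mp hj)
  rw [inv_pow]
  rw [pow_sub₀ (2:ℝ) (by norm_num) hle]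

lemma P_lt (hf : ∀ k, f k + 1 ≤ f (k+1)) (hf1 : 2 ≤ f 1) (k : ℕ) :
    P f k (f k) < 2 ^ (f k) := by
  have h1 : ((P f k (f k) : ℕ) : ℝ) = 2^(f k) * S f k :=
    P_eq k (f k) (fun j hj => mono_le hf (by omega))
  have h2 : (2:ℝ)^(f k) * S f k < 2^(f k) * 1 := by
    have := S_lt_one hf hf1 k
    have : (0:ℝ) < 2^(f k) := by positivity
    nlinarith [S_lt_one hf hf1 k]
  have h3 : ((P f k (f k) : ℕ) : ℝ) < ((2^(f k) : ℕ) : ℝ) := by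
    push_cast; rw [h1]; linarith
  exact_mod_cast h3

lemma liouville_X (hf : ∀ k, f k + 1 ≤ f (k+1)) (hf1 : 2 ≤ f 1)
    (hgrow : ∀ k, (k+1)*(f k + 1) ≤ f (k+1)) : Liouville (X f) := by
  intro m
  set k := m + 1 with hk
  refine ⟨(P f k (f k) : ℤ), (2:ℤ)^(f k), ?_, ?_, ?_⟩
  · have : 1 ≤ f k := le_trans (by omega) (mono_le hf (show 1 ≤ k by omega))
    calc (1:ℤ) < 2^1 := by norm_num
      _ ≤ 2^(f k) := pow_le_pow_right₀ (by norm_num) this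
  · have hdiv : ((P f k (f k) : ℤ) : ℝ) / (((2:ℤ)^(f k) : ℤ) : ℝ) = S f k := by
      push_cast
      rw [P_eq k (f k) (fun j hj => mono_le hf (by omega))]
      field_simp
    rw [hdiv, X_eq hf k]
    have := T_pos hf k
    intro h
    nlinarith
  · have hdiv : ((P f k (f k) : ℤ) : ℝ) / (((2:ℤ)^(f k) : ℤ) : ℝ) = S f k := by
      push_cast
      rw [P_eq k (f k) (fun j hj => mono_le hf (by omega))]
      field_simp
    rw [hdiv, X_eq hf k]
    have habs : |S f k + T f k - S f k| = T f k := by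
      rw [add_sub_cancel_left, abs_of_pos (T_pos hf k)]
    rw [habs]
    have h1 : T f k ≤ 2 * ((2:ℝ)⁻¹) ^ f (k+1) := T_le hf k
    have h2 : m * f k + 2 ≤ f (k+1) := by
      have := hgrow k
      have hfk : 1 ≤ f k := le_trans (by omega) (mono_le hf (show 1 ≤ k by omega))
      nlinarith
    have key : (2:ℝ) * ((2:ℝ)⁻¹) ^ f (k+1) < ((2:ℝ)⁻¹) ^ (f k * m) := by
      have hmono : ((2:ℝ)⁻¹) ^ f (k+1) ≤ ((2:ℝ)⁻¹) ^ (f k * m + 2) :=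
        pow_le_pow_of_le_one (by norm_num) (by norm_num) (by rw [mul_comm]; exact h2)
      have e : ((2:ℝ)⁻¹) ^ (f k * m + 2) = ((2:ℝ)⁻¹) ^ (f k * m) / 4 := by
        rw [pow_add]; norm_num; ring
      have hp : (0:ℝ) < ((2:ℝ)⁻¹) ^ (f k * m) := by positivity
      nlinarith
    calc T f k ≤ 2 * ((2:ℝ)⁻¹) ^ f (k+1) := h1
      _ < ((2:ℝ)⁻¹) ^ (f k * m) := key
      _ = 1 / (((2:ℤ)^(f k) : ℤ) : ℝ)^m := by
          push_cast
          rw [one_div, ← pow_mul, ← inv_pow]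


lemma approx (hf : ∀ k, f k + 1 ≤ f (k+1)) (hf1 : 2 ≤ f 1) {k n : ℕ} (hkn : f k + 1 ≤ n)
    {e : ℝ} (hspec : (2:ℝ)^(f k + 1) / 2^(f (k+1)) ≤ 2^n * e) :
    ∃ p q : ℤ, 0 ≤ p ∧ p ≤ 2^n - 1 ∧ 0 ≤ q ∧ q ≤ 2^n - 1 ∧ ¬(p = 0 ∧ q = 0) ∧
      (1/2^n) * |(q:ℝ) * X f - p| ≤ e := by
  have hqb : (2:ℤ)^(f k) ≤ 2^n - 1 := by
    have h1 : (2:ℤ)^(f k + 1) ≤ 2^n := pow_le_pow_right₀ (by norm_num) hkn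
    have h2 : (0:ℤ) < 2^(f k) := by positivity
    rw [pow_succ] at h1
    linarith
  have hPlt : ((P f k (f k) : ℕ) : ℤ) < (2:ℤ)^(f k) := by exact_mod_cast P_lt hf hf1 k
  refine ⟨(P f k (f k) : ℤ), (2:ℤ)^(f k), by positivity, by linarith, by positivity,
    hqb, ?_, ?_⟩
  · rintro ⟨-, hq⟩
    have : (0:ℤ) < 2^(f k) := by positivity
    omega
  · have hP : ((P f k (f k) : ℕ) : ℝ) = 2^(f k) * S f k :=
      P_eq k (f k) (fun j hj => mono_le hf (by omega))
    have hdiff : (((2:ℤ)^(f k) : ℤ) : ℝ) * X f - ((P f k (f k) : ℕ) : ℝ)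
        = 2^(f k) * T f k := by
      rw [X_eq hf k, hP]
      push_cast
      ring
    rw [show (((P f k (f k) : ℕ) : ℤ) : ℝ) = ((P f k (f k) : ℕ) : ℝ) by push_cast; ring]
    rw [hdiff, abs_of_nonneg (mul_nonneg (by positivity) (le_of_lt (T_pos hf k)))]
    have hb1 : (2:ℝ)^(f k) * T f k ≤ 2^n * e := by
      have h1 : (2:ℝ)^(f k) * T f k ≤ 2^(f k) * (2 * ((2:ℝ)⁻¹) ^ f (k+1)) :=
        mul_le_mul_of_nonneg_left (T_le hf k) (by positivity)
      have h2 : (2:ℝ)^(f k) * (2 * ((2:ℝ)⁻¹) ^ f (k+1)) = 2^(f k + 1) / 2^(f (k+1)) := by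
        rw [inv_pow, pow_succ, div_eq_mul_inv]
        ring
      rw [h2] at h1
      exact h1.trans hspec
    rw [div_mul_eq_mul_div, one_mul, div_le_iff₀ (by positivity : (0:ℝ) < 2^n)]
    calc (2:ℝ)^(f k) * T f k ≤ 2^n * e := hb1
      _ = e * 2^n := by ring

lemma indep (A B : ℕ → ℕ) (hfA : ∀ k, A k + 1 ≤ A (k+1)) (hfB : ∀ k, B k + 1 ≤ B (k+1))
    (hAltB : ∀ k, A k < B k)
    (hsep2 : ∀ k, B k + k + 2 ≤ A (k+1)) (hsep1 : ∀ k, A (k+1) + k + 2 ≤ B (k+1))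
    (u v w : ℤ) (hu : u ≠ 0) (hv : v ≠ 0)
    (heq : (u:ℝ) * X B = (v:ℝ) * X A + w) : False := by
  set M : ℕ := max u.natAbs v.natAbs with hMdef
  set k : ℕ := M with hkdef
  set σ : ℝ := T A k with hσdef
  set τ : ℝ := T B k with hτdef
  set a : ℝ := (2:ℝ)^(A (k+1)) with hadef
  set b : ℝ := (2:ℝ)^(B (k+1)) with hbdef
  set z : ℝ := (2:ℝ)^(B k) with hzdef
  have ha : (0:ℝ) < a := by positivity
  have hb' : (0:ℝ) < b := by positivity
  have hz : (0:ℝ) < z := by positivity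
  have hg : (2:ℝ)^(k+2) = 4 * 2^k := by rw [pow_add]; norm_num; ring
  have hmk : (M:ℝ) < 2^k := by
    have := Nat.lt_two_pow_self (n := M)
    rw [hkdef]
    exact_mod_cast this
  have hm1 : (1:ℝ) ≤ M := by
    have : 1 ≤ u.natAbs := Int.natAbs_pos.mpr hu
    have : 1 ≤ M := le_trans this (le_max_left _ _)
    exact_mod_cast this
  have hu' : |(u:ℝ)| ≤ (M:ℝ) := by
    have h1 : ((u.natAbs : ℕ) : ℝ) ≤ (M:ℝ) := by exact_mod_cast le_max_left u.natAbs v.natAbs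
    rwa [show |(u:ℝ)| = ((u.natAbs : ℕ) : ℝ) by rw [Nat.cast_natAbs, Int.cast_abs]]
  have hv' : |(v:ℝ)| ≤ (M:ℝ) := by
    have h1 : ((v.natAbs : ℕ) : ℝ) ≤ (M:ℝ) := by exact_mod_cast le_max_right u.natAbs v.natAbs
    rwa [show |(v:ℝ)| = ((v.natAbs : ℕ) : ℝ) by rw [Nat.cast_natAbs, Int.cast_abs]]
  have hv1 : (1:ℝ) ≤ |(v:ℝ)| := by
    have : (1:ℤ) ≤ |v| := Int.one_le_abs hv
    calc (1:ℝ) ≤ ((|v| : ℤ) : ℝ) := by exact_mod_cast this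
      _ = |(v:ℝ)| := by push_cast; ring
  have hσpos : 0 < σ := T_pos hfA k
  have hτpos : 0 < τ := T_pos hfB k
  have hσa1 : 1 ≤ σ * a := by
    have h := T_ge hfA k
    rw [inv_pow] at h
    have := mul_le_mul_of_nonneg_right h (le_of_lt ha)
    rwa [inv_mul_cancel₀ (ne_of_gt ha)] at this
  have hσa2 : σ * a ≤ 2 := by
    have h := T_le hfA k
    rw [inv_pow] at h
    have := mul_le_mul_of_nonneg_right h (le_of_lt ha)
    rwa [mul_assoc, inv_mul_cancel₀ (ne_of_gt ha), mul_one] at this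
  have hτb2 : τ * b ≤ 2 := by
    have h := T_le hfB k
    rw [inv_pow] at h
    have := mul_le_mul_of_nonneg_right h (le_of_lt hb')
    rwa [mul_assoc, inv_mul_cancel₀ (ne_of_gt hb'), mul_one] at this
  have hgab : a * (2:ℝ)^(k+2) ≤ b := by
    rw [hadef, hbdef, ← pow_add]
    exact pow_le_pow_right₀ (by norm_num) (hsep1 k)
  have hgza : z * (2:ℝ)^(k+2) ≤ a := by
    rw [hadef, hzdef, ← pow_add]
    exact pow_le_pow_right₀ (by norm_num) (hsep2 k)
  have hτa2 : τ * a ≤ 2 := by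
    have hone : (1:ℝ) ≤ (2:ℝ)^(k+2) := one_le_pow₀ (by norm_num)
    have hab : a ≤ b := by
      calc a = a * 1 := by ring
        _ ≤ a * (2:ℝ)^(k+2) := mul_le_mul_of_nonneg_left hone ha.le
        _ ≤ b := hgab
    calc τ * a ≤ τ * b := mul_le_mul_of_nonneg_left hab hτpos.le
      _ ≤ 2 := hτb2
  -- key1 : M * τ < σ
  have key1 : (M:ℝ) * τ < σ := by
    have h1 : (M:ℝ) * τ * b ≤ 2 * M := by
      have := mul_le_mul_of_nonneg_left hτb2 (show (0:ℝ) ≤ M by positivity)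
      linarith
    have h2 : (2:ℝ)^(k+2) ≤ σ * (a * (2:ℝ)^(k+2)) := by
      have hp : (0:ℝ) < (2:ℝ)^(k+2) := by positivity
      have := mul_le_mul_of_nonneg_right hσa1 hp.le
      linarith
    have h3 : σ * (a * (2:ℝ)^(k+2)) ≤ σ * b := mul_le_mul_of_nonneg_left hgab (le_of_lt hσpos)
    have h4 : 2 * (M:ℝ) < (2:ℝ)^(k+2) := by
      have hp : (0:ℝ) < (2:ℝ)^k := by positivity
      rw [hg]; linarith
    have e5 : (M:ℝ) * τ * b < σ * b := by linarith
    exact lt_of_mul_lt_mul_right e5 hb'.le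
  -- key2
  have key2 : z * ((M:ℝ) * σ + (M:ℝ) * τ) < 1 := by
    have h4 : 4 * (M:ℝ) * z < a := by
      have h5 : (M:ℝ) * z < (2:ℝ)^k * z := mul_lt_mul_of_pos_right hmk hz
      have e : z * (2:ℝ)^(k+2) = 4 * ((2:ℝ)^k * z) := by rw [hg]; ring
      linarith
    have hzm : (0:ℝ) ≤ z * (M:ℝ) := by positivity
    have e1 : z * (M:ℝ) * (σ * a) ≤ z * (M:ℝ) * 2 := mul_le_mul_of_nonneg_left hσa2 hzm
    have e2 : z * (M:ℝ) * (τ * a) ≤ z * (M:ℝ) * 2 := mul_le_mul_of_nonneg_left hτa2 hzm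
    have e3 : z * ((M:ℝ) * σ + (M:ℝ) * τ) * a = z * (M:ℝ) * (σ * a) + z * (M:ℝ) * (τ * a) := by
      ring
    have e6 : z * ((M:ℝ) * σ + (M:ℝ) * τ) * a < 1 * a := by
      have e7 : z * (M:ℝ) * 2 + z * (M:ℝ) * 2 = 4 * (M:ℝ) * z := by ring
      rw [one_mul]
      linarith
    exact lt_of_mul_lt_mul_right e6 ha.le
  -- the integer
  have hmA : ∀ j, j < k → A (j+1) ≤ B k := fun j hj =>
    le_of_lt (lt_of_le_of_lt (mono_le hfA (by omega)) (hAltB k))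
  have hmB : ∀ j, j < k → B (j+1) ≤ B k := fun j hj => mono_le hfB (by omega)
  have hPt : ((P B k (B k) : ℕ) : ℝ) = z * S B k := P_eq k (B k) hmB
  have hQs : ((P A k (B k) : ℕ) : ℝ) = z * S A k := P_eq k (B k) hmA
  have hXA : X A = S A k + σ := X_eq hfA k
  have hXB : X B = S B k + τ := X_eq hfB k
  rw [hXA, hXB] at heq
  set Z : ℤ := u * (P B k (B k) : ℤ) - v * (P A k (B k) : ℤ) - w * 2^(B k) with hZdef
  have hZ : ((Z : ℤ) : ℝ) = z * ((v:ℝ) * σ - (u:ℝ) * τ) := by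
    rw [hZdef]
    push_cast
    rw [hPt, hQs]
    rw [hzdef]
    push_cast
    linear_combination ((2:ℝ)^(B k)) * heq
  have habs : |((Z : ℤ) : ℝ)| < 1 := by
    rw [hZ, abs_mul, abs_of_pos hz]
    have h1 : |(v:ℝ) * σ - (u:ℝ) * τ| ≤ (M:ℝ) * σ + (M:ℝ) * τ := by
      calc |(v:ℝ) * σ - (u:ℝ) * τ| ≤ |(v:ℝ) * σ| + |(u:ℝ) * τ| := by
            simpa [abs_neg, sub_eq_add_neg] using abs_add_le ((v:ℝ) * σ) (-((u:ℝ) * τ))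
        _ = |(v:ℝ)| * σ + |(u:ℝ)| * τ := by
            rw [abs_mul, abs_mul, abs_of_pos hσpos, abs_of_pos hτpos]
        _ ≤ (M:ℝ) * σ + (M:ℝ) * τ :=
            add_le_add (mul_le_mul_of_nonneg_right hv' hσpos.le)
              (mul_le_mul_of_nonneg_right hu' hτpos.le)
    calc z * |(v:ℝ) * σ - (u:ℝ) * τ| ≤ z * ((M:ℝ) * σ + (M:ℝ) * τ) :=
          mul_le_mul_of_nonneg_left h1 (le_of_lt hz)
      _ < 1 := key2
  have hZ0 : Z = 0 := by
    have : |Z| < 1 := by exact_mod_cast habs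
    exact Int.abs_lt_one_iff.mp this
  rw [hZ0] at hZ
  simp only [Int.cast_zero] at hZ
  have hvu : (v:ℝ) * σ = (u:ℝ) * τ := by
    rcases mul_eq_zero.mp hZ.symm with h | h
    · exact absurd h (ne_of_gt hz)
    · linarith [sub_eq_zero.mp h]
  have hlt : |(u:ℝ) * τ| < |(v:ℝ) * σ| := by
    rw [abs_mul, abs_mul, abs_of_pos hσpos, abs_of_pos hτpos]
    calc |(u:ℝ)| * τ ≤ (M:ℝ) * τ := mul_le_mul_of_nonneg_right hu' hτpos.le
      _ < σ := key1
      _ ≤ |(v:ℝ)| * σ := le_mul_of_one_le_left hσpos.le hv1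
  rw [hvu] at hlt
  exact lt_irrefl _ hlt



lemma pow_div_le (e : ℝ) (he : 0 < e) (c : ℕ) : ∃ N : ℕ, (2:ℝ)^c / 2^N ≤ e := by
  obtain ⟨N, hN⟩ := pow_unbounded_of_one_lt ((2:ℝ)^c / e) (by norm_num : (1:ℝ) < 2)
  refine ⟨N, ?_⟩
  rw [div_le_iff₀ (by positivity)]
  rw [div_lt_iff₀ he] at hN
  nlinarith [pow_pos (by norm_num : (0:ℝ) < 2) N, pow_pos (by norm_num : (0:ℝ) < 2) c]

lemma pow_div_anti {c N N' : ℕ} (h : N ≤ N') : (2:ℝ)^c / 2^N' ≤ (2:ℝ)^c / 2^N := by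
  apply div_le_div_of_nonneg_left (by positivity) (by positivity)
  exact pow_le_pow_right₀ (by norm_num) h

lemma exists_next (ε : ℕ → ℝ) (hpos : ∀ n, 1 ≤ n → 0 < ε n) (c L U : ℕ) :
    ∃ N : ℕ, L ≤ N ∧ ∀ n, 1 ≤ n → n ≤ U → (2:ℝ) ^ c / 2 ^ N ≤ 2 ^ n * ε n := by
  induction U with
  | zero => exact ⟨L, le_rfl, fun n h1 h0 => absurd (h1.trans h0) (by norm_num)⟩
  | succ U ih =>
    obtain ⟨N, hLN, hN⟩ := ih
    obtain ⟨N', hN'⟩ := pow_div_le (2 ^ (U+1) * ε (U+1)) (by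
      have := hpos (U+1) (by omega); positivity) c
    refine ⟨max N N', le_trans hLN (le_max_left _ _), fun n h1 hn => ?_⟩
    rcases Nat.lt_or_ge n (U+1) with h | h
    · exact le_trans (pow_div_anti (le_max_left _ _)) (hN n h1 (by omega))
    · have : n = U + 1 := by omega
      subst this
      exact le_trans (pow_div_anti (le_max_right _ _)) hN'

noncomputable def nextA (ε : ℕ → ℝ) (hpos : ∀ n, 1 ≤ n → 0 < ε n) (k : ℕ) (p : ℕ × ℕ) : ℕ :=
  (exists_next ε hpos (p.1 + 1) (max (p.2 + k + 2) ((k+1)*(p.1+1))) p.2).choose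

noncomputable def nextB (ε : ℕ → ℝ) (hpos : ∀ n, 1 ≤ n → 0 < ε n) (k : ℕ) (p : ℕ × ℕ)
    (A' : ℕ) : ℕ :=
  (exists_next ε hpos (p.2 + 1) (max (A' + k + 2) ((k+1)*(p.2+1))) A').choose

noncomputable def seq (ε : ℕ → ℝ) (hpos : ∀ n, 1 ≤ n → 0 < ε n) : ℕ → ℕ × ℕ
  | 0 => (0, 1)
  | k + 1 =>
    (nextA ε hpos k (seq ε hpos k),
     nextB ε hpos k (seq ε hpos k) (nextA ε hpos k (seq ε hpos k)))

variable (ε : ℕ → ℝ) (hpos : ∀ n, 1 ≤ n → 0 < ε n)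

noncomputable def A (k : ℕ) : ℕ := (seq ε hpos k).1
noncomputable def B (k : ℕ) : ℕ := (seq ε hpos k).2

lemma A_zero : A ε hpos 0 = 0 := rfl
lemma B_zero : B ε hpos 0 = 1 := rfl

lemma specA (k : ℕ) :
    (max (B ε hpos k + k + 2) ((k+1)*(A ε hpos k + 1)) ≤ A ε hpos (k+1)) ∧
    ∀ n, 1 ≤ n → n ≤ B ε hpos k →
      (2:ℝ) ^ (A ε hpos k + 1) / 2 ^ (A ε hpos (k+1)) ≤ 2 ^ n * ε n := by
  have h := (exists_next ε hpos ((seq ε hpos k).1 + 1)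
    (max ((seq ε hpos k).2 + k + 2) ((k+1)*((seq ε hpos k).1+1))) (seq ε hpos k).2).choose_spec
  exact h

lemma specB (k : ℕ) :
    (max (A ε hpos (k+1) + k + 2) ((k+1)*(B ε hpos k + 1)) ≤ B ε hpos (k+1)) ∧
    ∀ n, 1 ≤ n → n ≤ A ε hpos (k+1) →
      (2:ℝ) ^ (B ε hpos k + 1) / 2 ^ (B ε hpos (k+1)) ≤ 2 ^ n * ε n := by
  have h := (exists_next ε hpos ((seq ε hpos k).2 + 1)
    (max (nextA ε hpos k (seq ε hpos k) + k + 2) ((k+1)*((seq ε hpos k).2+1)))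
    (nextA ε hpos k (seq ε hpos k))).choose_spec
  exact h



lemma cover (A B : ℕ → ℕ) (hA0 : A 0 = 0) (hB0 : B 0 = 1)
    (hAB : ∀ k, A k + 1 ≤ B k) (hBA : ∀ k, B k + 1 ≤ A (k+1)) (n : ℕ) (hn : 1 ≤ n) :
    ∃ k, (A k + 1 ≤ n ∧ n ≤ B k) ∨ (B k + 1 ≤ n ∧ n ≤ A (k+1)) := by
  induction n with
  | zero => omega
  | succ n ih =>
    rcases Nat.lt_or_ge 1 (n+1) with h | h
    · obtain ⟨k, hk | hk⟩ := ih (by omega)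
      · rcases Nat.lt_or_ge n (B k) with h2 | h2
        · exact ⟨k, Or.inl ⟨by omega, by omega⟩⟩
        · exact ⟨k, Or.inr ⟨by omega, by have := hBA k; omega⟩⟩
      · rcases Nat.lt_or_ge n (A (k+1)) with h2 | h2
        · exact ⟨k, Or.inr ⟨by omega, by omega⟩⟩
        · exact ⟨k+1, Or.inl ⟨by omega, by have := hAB (k+1); omega⟩⟩
    · have : n + 1 = 1 := by omega
      rw [this]
      exact ⟨0, Or.inl ⟨by omega, by omega⟩⟩

end S18


theorem stmt18 (ε : ℕ → ℝ) (hpos : ∀ n, 1 ≤ n → 0 < ε n)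
    (hsmall : ∀ n, 1 ≤ n → ε n ≤ 1 / 8 ^ n) :
    ∃ s t : ℝ, s ∈ Set.Ioo (0:ℝ) 1 ∧ t ∈ Set.Ioo (0:ℝ) 1 ∧
      Liouville s ∧ Liouville t ∧
      (¬ ∃ a b c d : ℤ, a ≠ 0 ∧ b ≠ 0 ∧ d ≠ 0 ∧ t = ((a : ℝ) / b) * s + (c : ℝ) / d) ∧
      ∀ n : ℕ, 1 ≤ n →
        (∃ p q : ℤ, 0 ≤ p ∧ p ≤ 2 ^ n - 1 ∧ 0 ≤ q ∧ q ≤ 2 ^ n - 1 ∧ ¬(p = 0 ∧ q = 0) ∧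
          (1 / 2 ^ n) * |(q : ℝ) * s - p| ≤ ε n) ∨
        (∃ p q : ℤ, 0 ≤ p ∧ p ≤ 2 ^ n - 1 ∧ 0 ≤ q ∧ q ≤ 2 ^ n - 1 ∧ ¬(p = 0 ∧ q = 0) ∧
          (1 / 2 ^ n) * |(q : ℝ) * t - p| ≤ ε n) := by
  classical
  set A : ℕ → ℕ := S18.A ε hpos with hAdef
  set B : ℕ → ℕ := S18.B ε hpos with hBdef
  have hA0 : A 0 = 0 := rfl
  have hB0 : B 0 = 1 := rfl
  have hsep1 : ∀ k, A (k+1) + k + 2 ≤ B (k+1) := fun k =>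
    le_trans (le_max_left _ _) (S18.specB ε hpos k).1
  have hsep2 : ∀ k, B k + k + 2 ≤ A (k+1) := fun k =>
    le_trans (le_max_left _ _) (S18.specA ε hpos k).1
  have hgrowA : ∀ k, (k+1)*(A k + 1) ≤ A (k+1) := fun k =>
    le_trans (le_max_right _ _) (S18.specA ε hpos k).1
  have hgrowB : ∀ k, (k+1)*(B k + 1) ≤ B (k+1) := fun k =>
    le_trans (le_max_right _ _) (S18.specB ε hpos k).1
  have hAB : ∀ k, A k + 1 ≤ B k := by
    intro k
    cases k with
    | zero => rw [hA0, hB0]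
    | succ k => have := hsep1 k; omega
  have hBA : ∀ k, B k + 1 ≤ A (k+1) := fun k => by have := hsep2 k; omega
  have hfA : ∀ k, A k + 1 ≤ A (k+1) := fun k => by have := hAB k; have := hBA k; omega
  have hfB : ∀ k, B k + 1 ≤ B (k+1) := fun k => by have := hsep1 k; have := hBA k; omega
  have hA1 : 2 ≤ A 1 := by have := hsep2 0; rw [hB0] at this; simp only [Nat.zero_add] at this; omega
  have hB1 : 2 ≤ B 1 := by have h1 := hsep1 0; simp only [Nat.zero_add] at h1; omega
  refine ⟨S18.X A, S18.X B, ⟨S18.X_pos hfA, S18.X_lt_one hfA hA1⟩,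
    ⟨S18.X_pos hfB, S18.X_lt_one hfB hB1⟩,
    S18.liouville_X hfA hA1 hgrowA, S18.liouville_X hfB hB1 hgrowB, ?_, ?_⟩
  · rintro ⟨a, b, c, d, ha, hb, hd, habcd⟩
    refine S18.indep A B hfA hfB (fun k => by have := hAB k; omega) hsep2 hsep1
      (b*d) (a*d) (c*b) (mul_ne_zero hb hd) (mul_ne_zero ha hd) ?_
    have hb' : (b:ℝ) ≠ 0 := Int.cast_ne_zero.mpr hb
    have hd' : (d:ℝ) ≠ 0 := Int.cast_ne_zero.mpr hd
    push_cast
    rw [habcd]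
    field_simp
  · intro n hn
    obtain ⟨k, hc | hc⟩ := S18.cover A B hA0 hB0 hAB hBA n hn
    · exact Or.inl (S18.approx hfA hA1 (by omega : A k + 1 ≤ n)
        ((S18.specA ε hpos k).2 n hn hc.2))
    · exact Or.inr (S18.approx hfB hB1 (by omega : B k + 1 ≤ n)
        ((S18.specB ε hpos k).2 n hn hc.2))
end
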